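/- arXiv:2510.05628 — 4 statements merged into one kernel-verified Lean document; each statement's English description precedes it below -/
import Mathlib

section
/- Let A₁,…,A_h be pairwise distinct points of ℙ¹ and B₁,…,B_v pairwise distinct points of ℙ¹. Then the ideal generated by the two products H_{A₁}⋯H_{A_h} and V_{B₁}⋯V_{B_v} equals the defining ideal of the grid: Ideal.span {H_{A₁}⋯H_{A_h}, V_{B₁}⋯V_{B_v}} = ⋂_{1≤i≤h, 1≤j≤v} ⟨H_{Aᵢ}, V_{Bⱼ}⟩. -/
/- Common setup: R = ℂ[x₀,x₁,y₀,y₁] as MvPolynomial (Fin 4) ℂ with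
   x₀ = X 0, x₁ = X 1, y₀ = X 2, y₁ = X 3.
   `Hf a` is the horizontal form a₁x₀ - a₀x₁ of the point a = [a₀:a₁] ∈ ℙ¹;
   `Vf b` is the vertical form b₁y₀ - b₀y₁;
   `cross a b ≠ 0` says the (nonzero) pairs a, b are non-proportional,
   i.e. define distinct points of ℙ¹. -/

open MvPolynomial

noncomputable section

abbrev R : Type := MvPolynomial (Fin 4) ℂ

def Hf (a : ℂ × ℂ) : R := C a.2 * X 0 - C a.1 * X 1

def Vf (b : ℂ × ℂ) : R := C b.2 * X 2 - C b.1 * X 3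

def cross (a b : ℂ × ℂ) : ℂ := a.1 * b.2 - a.2 * b.1

/-- The defining ideal of the point P = A×B of ℙ¹×ℙ¹. -/
def Ipt (P : (ℂ × ℂ) × (ℂ × ℂ)) : Ideal R := Ideal.span {Hf P.1, Vf P.2}

/-- The defining ideal of a finite set of points (I_∅ = R = ⊤). -/
def Ipts (X : Finset ((ℂ × ℂ) × (ℂ × ℂ))) : Ideal R := X.inf Ipt

/-- The defining ideal of a set of points (I_∅ = R = ⊤). -/
def IptsSet (W : Set ((ℂ × ℂ) × (ℂ × ℂ))) : Ideal R := ⨅ P ∈ W, Ipt P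

/-- Bihomogeneous: homogeneous separately in x₀,x₁ and in y₀,y₁. -/
def Bihom (f : R) : Prop :=
  ∃ a b : ℕ, IsWeightedHomogeneous (![1,1,0,0] : Fin 4 → ℕ) f a ∧
    IsWeightedHomogeneous (![0,0,1,1] : Fin 4 → ℕ) f b

/-- `G` minimally generates `I`. -/
def MinGen (G : Finset R) (I : Ideal R) : Prop :=
  Ideal.span (G : Set R) = I ∧ ∀ g ∈ G, Ideal.span ((G : Set R) \ {g}) ≠ I

/-- generic substitution lemma -/
lemma sub_aeval_mem (g : Fin 4 → R) (f : R) :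
    f - aeval g f ∈ Ideal.span (Set.range fun i => (X i : R) - g i) := by
  induction f using MvPolynomial.induction_on with
  | C c => simp
  | add p q hp hq =>
      have h : p + q - aeval g (p + q) = (p - aeval g p) + (q - aeval g q) := by
        rw [map_add]; ring
      rw [h]; exact add_mem hp hq
  | mul_X p i hp =>
      have h : p * X i - aeval g (p * X i)
          = (p - aeval g p) * X i + aeval g p * (X i - g i) := by
        rw [map_mul, aeval_X]; ring
      rw [h]
      exact add_mem (Ideal.mul_mem_right _ _ hp)
        (Ideal.mul_mem_left _ _ (Ideal.subset_span ⟨i, rfl⟩))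

def lsub (c : ℂ × ℂ) (u w : R) : R × R :=
  if c.2 = 0 then (u, 0) else (C (c.1 / c.2) * w, w)

lemma lsub_sub_fst (c : ℂ × ℂ) (u w : R) :
    u - (lsub c u w).1 ∈ Ideal.span {C c.2 * u - C c.1 * w} := by
  by_cases h : c.2 = 0
  · simp [lsub, h]
  · have key : u - (lsub c u w).1 = C c.2⁻¹ * (C c.2 * u - C c.1 * w) := by
      simp only [lsub, h, if_false]
      rw [mul_sub, ← mul_assoc, ← mul_assoc, ← C_mul, ← C_mul,
        inv_mul_cancel₀ h, C_1, one_mul, inv_mul_eq_div]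
    rw [key]
    exact Ideal.mul_mem_left _ _ (Ideal.subset_span rfl)

lemma lsub_sub_snd (c : ℂ × ℂ) (hc : c ≠ 0) (u w : R) :
    w - (lsub c u w).2 ∈ Ideal.span {C c.2 * u - C c.1 * w} := by
  by_cases h : c.2 = 0
  · have h1 : c.1 ≠ 0 := by
      intro h1; exact hc (Prod.ext h1 h)
    have key : w - (lsub c u w).2 = C (-c.1⁻¹) * (C c.2 * u - C c.1 * w) := by
      simp only [lsub, h, if_true, sub_zero]
      have e : (C (-c.1⁻¹) : R) * C c.1 = -1 := by
        rw [← C_mul, neg_mul, inv_mul_cancel₀ h1, C_neg, C_1]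
      rw [C_0, zero_mul, zero_sub]
      linear_combination w * e
    rw [key]
    exact Ideal.mul_mem_left _ _ (Ideal.subset_span rfl)
  · simp [lsub, h]

lemma lsub_self (c : ℂ × ℂ) (u w : R) :
    C c.2 * (lsub c u w).1 - C c.1 * (lsub c u w).2 = 0 := by
  by_cases h : c.2 = 0
  · simp [lsub, h]
  · have h2 : c.2 * (c.1 / c.2) = c.1 := by field_simp
    simp only [lsub, h, if_false]
    rw [← mul_assoc, ← C_mul, h2, sub_self]

lemma lsub_cross (c d : ℂ × ℂ) (hcd : cross c d ≠ 0) (u w : R)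
    (hu : u ≠ 0) (hw : w ≠ 0) :
    C d.2 * (lsub c u w).1 - C d.1 * (lsub c u w).2 ≠ 0 := by
  by_cases h : c.2 = 0
  · have hd2 : d.2 ≠ 0 := by
      intro h2; apply hcd; simp [cross, h, h2]
    simp only [lsub, h, if_true, mul_zero, sub_zero]
    refine mul_ne_zero ?_ hu
    rwa [Ne, ← C_0, C_inj]
  · have he : d.2 * (c.1 / c.2) - d.1 ≠ 0 := by
      intro h2; apply hcd
      field_simp at h2
      unfold cross
      linear_combination h2
    simp only [lsub, h, if_false]
    have e : C d.2 * (C (c.1 / c.2) * w) - C d.1 * w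
        = C (d.2 * (c.1 / c.2) - d.1) * w := by
      rw [C_sub, C_mul, sub_mul, mul_assoc]
    rw [e]
    refine mul_ne_zero ?_ hw
    rwa [Ne, ← C_0, C_inj]

def gsub (a b : ℂ × ℂ) : Fin 4 → R :=
  ![(lsub a (X 0) (X 1)).1, (lsub a (X 0) (X 1)).2,
    (lsub b (X 2) (X 3)).1, (lsub b (X 2) (X 3)).2]

lemma aeval_gsub_Hf (a b a' : ℂ × ℂ) :
    aeval (gsub a b) (Hf a')
      = C a'.2 * (lsub a (X 0) (X 1)).1 - C a'.1 * (lsub a (X 0) (X 1)).2 := by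
  simp [Hf, gsub]

lemma aeval_gsub_Vf (a b b' : ℂ × ℂ) :
    aeval (gsub a b) (Vf b')
      = C b'.2 * (lsub b (X 2) (X 3)).1 - C b'.1 * (lsub b (X 2) (X 3)).2 := by
  simp [Vf, gsub]

lemma mem_Ipt_iff (a b : ℂ × ℂ) (ha : a ≠ 0) (hb : b ≠ 0) (f : R) :
    f ∈ Ipt (a, b) ↔ aeval (gsub a b) f = 0 := by
  constructor
  · intro hf
    obtain ⟨p, q, hpq⟩ := Ideal.mem_span_pair.mp hf
    rw [← hpq, map_add, map_mul, map_mul, aeval_gsub_Hf, aeval_gsub_Vf,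
      lsub_self, lsub_self, mul_zero, mul_zero, add_zero]
  · intro hf
    have hspan : Ideal.span (Set.range fun i => (X i : R) - gsub a b i) ≤ Ipt (a, b) := by
      rw [Ideal.span_le]
      rintro _ ⟨i, rfl⟩
      have hH : Ideal.span {Hf a} ≤ Ipt (a, b) :=
        Ideal.span_mono (Set.singleton_subset_iff.mpr (Set.mem_insert _ _))
      have hV : Ideal.span {Vf b} ≤ Ipt (a, b) :=
        Ideal.span_mono (Set.singleton_subset_iff.mpr (Set.mem_insert_of_mem _ rfl))
      fin_cases i
      · exact hH (lsub_sub_fst a (X 0) (X 1))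
      · exact hH (lsub_sub_snd a ha (X 0) (X 1))
      · exact hV (lsub_sub_fst b (X 2) (X 3))
      · exact hV (lsub_sub_snd b hb (X 2) (X 3))
    have := hspan (sub_aeval_mem (gsub a b) f)
    rwa [hf, sub_zero] at this

lemma Ipt_prime (a b : ℂ × ℂ) (ha : a ≠ 0) (hb : b ≠ 0) : (Ipt (a, b)).IsPrime := by
  rw [Ideal.isPrime_iff]
  constructor
  · intro htop
    have h1 : (1 : R) ∈ Ipt (a, b) := htop ▸ Submodule.mem_top
    have := (mem_Ipt_iff a b ha hb 1).mp h1
    simp at this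
  · intro f g hfg
    have := (mem_Ipt_iff a b ha hb _).mp hfg
    rw [map_mul] at this
    rcases mul_eq_zero.mp this with h | h
    · exact Or.inl ((mem_Ipt_iff a b ha hb f).mpr h)
    · exact Or.inr ((mem_Ipt_iff a b ha hb g).mpr h)

lemma Hf_not_mem (a b a' : ℂ × ℂ) (ha : a ≠ 0) (hb : b ≠ 0)
    (hcd : cross a a' ≠ 0) : Hf a' ∉ Ipt (a, b) := by
  rw [mem_Ipt_iff a b ha hb, aeval_gsub_Hf]
  exact lsub_cross a a' hcd _ _ (X_ne_zero 0) (X_ne_zero 1)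

lemma Vf_not_mem (a b b' : ℂ × ℂ) (ha : a ≠ 0) (hb : b ≠ 0)
    (hcd : cross b b' ≠ 0) : Vf b' ∉ Ipt (a, b) := by
  rw [mem_Ipt_iff a b ha hb, aeval_gsub_Vf]
  exact lsub_cross b b' hcd _ _ (X_ne_zero 2) (X_ne_zero 3)

lemma prod_not_mem (P : Ideal R) (hP : P.IsPrime) (s : Finset ℕ) (f : ℕ → R)
    (h : ∀ j ∈ s, f j ∉ P) : (∏ j ∈ s, f j) ∉ P := by
  classical
  induction s using Finset.induction with
  | empty =>
      simpa [Finset.prod_empty] using (Ideal.ne_top_iff_one P).mp hP.ne_top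
  | insert _ _ hj ih =>
      rename_i j₀ s'
      rw [Finset.prod_insert hj]
      intro hmem
      rcases hP.mem_or_mem hmem with h1 | h1
      · exact h j₀ (Finset.mem_insert_self _ _) h1
      · exact ih (fun j hjs => h j (Finset.mem_insert_of_mem hjs)) h1

lemma step1 (a : ℂ × ℂ) (ha : a ≠ 0) (B : ℕ → ℂ × ℂ) (s : Finset ℕ)
    (hB : ∀ j ∈ s, B j ≠ 0)
    (hBd : ∀ j ∈ s, ∀ j' ∈ s, j ≠ j' → cross (B j) (B j') ≠ 0) :
    (⨅ j ∈ s, Ideal.span {Hf a, Vf (B j)}) = Ideal.span {Hf a, ∏ j ∈ s, Vf (B j)} := by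
  classical
  induction s using Finset.induction with
  | empty =>
      rw [Finset.prod_empty]
      simp only [Finset.notMem_empty, iInf_false, iInf_top]
      symm
      rw [Ideal.eq_top_iff_one]
      exact Ideal.subset_span (Set.mem_insert_of_mem _ rfl)
  | insert _ _ hj ih =>
      rename_i j₀ s'
      have hB' : ∀ j ∈ s', B j ≠ 0 := fun j hjs => hB j (Finset.mem_insert_of_mem hjs)
      have hBd' : ∀ j ∈ s', ∀ j' ∈ s', j ≠ j' → cross (B j) (B j') ≠ 0 :=
        fun j hjs j' hjs' => hBd j (Finset.mem_insert_of_mem hjs) j' (Finset.mem_insert_of_mem hjs')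
      rw [Finset.iInf_insert, ih hB' hBd', Finset.prod_insert hj]
      apply le_antisymm
      · intro p hp
        rw [Submodule.mem_inf] at hp
        obtain ⟨h1, h2⟩ := hp
        obtain ⟨α', β', hp2⟩ := Ideal.mem_span_pair.mp h2
        have hprodmem : β' * ∏ j ∈ s', Vf (B j) ∈ Ideal.span {Hf a, Vf (B j₀)} := by
          have : β' * ∏ j ∈ s', Vf (B j) = p - α' * Hf a := by linear_combination hp2
          rw [this]
          exact sub_mem h1 (Ideal.mul_mem_left _ _ (Ideal.subset_span (Set.mem_insert _ _)))
        have hP : (Ideal.span {Hf a, Vf (B j₀)} : Ideal R).IsPrime :=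
          Ipt_prime a (B j₀) ha (hB j₀ (Finset.mem_insert_self _ _))
        have hprodnot : (∏ j ∈ s', Vf (B j)) ∉ Ideal.span {Hf a, Vf (B j₀)} := by
          refine prod_not_mem _ hP s' _ fun j hjs => ?_
          exact Vf_not_mem a (B j₀) (B j) ha (hB j₀ (Finset.mem_insert_self _ _))
            (hBd j₀ (Finset.mem_insert_self _ _) j (Finset.mem_insert_of_mem hjs)
              (fun he => hj (he ▸ hjs)))
        have hβ'mem : β' ∈ Ideal.span {Hf a, Vf (B j₀)} := by
          rcases hP.mem_or_mem hprodmem with h | h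
          · exact h
          · exact absurd h hprodnot
        obtain ⟨γ, δ, hγδ⟩ := Ideal.mem_span_pair.mp hβ'mem
        refine Ideal.mem_span_pair.mpr ⟨α' + γ * ∏ j ∈ s', Vf (B j), δ, ?_⟩
        linear_combination hp2 + (∏ j ∈ s', Vf (B j)) * hγδ
      · refine le_inf ?_ ?_ <;> rw [Ideal.span_le] <;> rintro x (rfl | rfl)
        · exact Ideal.subset_span (Set.mem_insert _ _)
        · exact Ideal.mul_mem_right _ _
            (Ideal.subset_span (Set.mem_insert_of_mem _ rfl))
        · exact Ideal.subset_span (Set.mem_insert _ _)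
        · exact Ideal.mul_mem_left _ _
            (Ideal.subset_span (Set.mem_insert_of_mem _ rfl))

lemma step2 (A B : ℕ → ℂ × ℂ) (t s : Finset ℕ)
    (hA : ∀ i ∈ t, A i ≠ 0)
    (hAd : ∀ i ∈ t, ∀ i' ∈ t, i ≠ i' → cross (A i) (A i') ≠ 0)
    (hB : ∀ j ∈ s, B j ≠ 0)
    (hBd : ∀ j ∈ s, ∀ j' ∈ s, j ≠ j' → cross (B j) (B j') ≠ 0) :
    (⨅ i ∈ t, Ideal.span {Hf (A i), ∏ j ∈ s, Vf (B j)})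
      = Ideal.span {∏ i ∈ t, Hf (A i), ∏ j ∈ s, Vf (B j)} := by
  classical
  induction t using Finset.induction with
  | empty =>
      rw [Finset.prod_empty]
      simp only [Finset.notMem_empty, iInf_false, iInf_top]
      symm
      rw [Ideal.eq_top_iff_one]
      exact Ideal.subset_span (Set.mem_insert _ _)
  | insert _ _ hi ih =>
      rename_i i₀ t'
      have hA' : ∀ i ∈ t', A i ≠ 0 := fun i hit => hA i (Finset.mem_insert_of_mem hit)
      have hAd' : ∀ i ∈ t', ∀ i' ∈ t', i ≠ i' → cross (A i) (A i') ≠ 0 :=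
        fun i hit i' hit' => hAd i (Finset.mem_insert_of_mem hit) i' (Finset.mem_insert_of_mem hit')
      have hA0 : A i₀ ≠ 0 := hA i₀ (Finset.mem_insert_self _ _)
      rw [Finset.iInf_insert, ih hA' hAd', Finset.prod_insert hi]
      -- key: span {Hf (A i₀), ∏ V} = ⨅ j ∈ s, span {Hf (A i₀), Vf (B j)}
      have hkey := step1 (A i₀) hA0 B s hB hBd
      apply le_antisymm
      · intro p hp
        rw [Submodule.mem_inf] at hp
        obtain ⟨h1, h2⟩ := hp
        obtain ⟨α', β', hp2⟩ := Ideal.mem_span_pair.mp h2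
        have hG : (∏ j ∈ s, Vf (B j)) ∈ Ideal.span {Hf (A i₀), ∏ j ∈ s, Vf (B j)} :=
          Ideal.subset_span (Set.mem_insert_of_mem _ rfl)
        have hprodmem : α' * ∏ i ∈ t', Hf (A i)
            ∈ Ideal.span {Hf (A i₀), ∏ j ∈ s, Vf (B j)} := by
          have : α' * ∏ i ∈ t', Hf (A i) = p - β' * ∏ j ∈ s, Vf (B j) := by
            linear_combination hp2
          rw [this]
          exact sub_mem h1 (Ideal.mul_mem_left _ _ hG)
        have hα'mem : α' ∈ Ideal.span {Hf (A i₀), ∏ j ∈ s, Vf (B j)} := by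
          rw [← hkey]
          rw [← hkey] at hprodmem
          simp only [Submodule.mem_iInf] at hprodmem ⊢
          intro j hjs
          have hPj : (Ideal.span {Hf (A i₀), Vf (B j)} : Ideal R).IsPrime :=
            Ipt_prime (A i₀) (B j) hA0 (hB j hjs)
          have hHnot : (∏ i ∈ t', Hf (A i)) ∉ Ideal.span {Hf (A i₀), Vf (B j)} := by
            refine prod_not_mem _ hPj t' _ fun i hit => ?_
            exact Hf_not_mem (A i₀) (B j) (A i) hA0 (hB j hjs)
              (hAd i₀ (Finset.mem_insert_self _ _) i (Finset.mem_insert_of_mem hit)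
                (fun he => hi (he ▸ hit)))
          rcases hPj.mem_or_mem (hprodmem j hjs) with h | h
          · exact h
          · exact absurd h hHnot
        obtain ⟨γ, δ, hγδ⟩ := Ideal.mem_span_pair.mp hα'mem
        refine Ideal.mem_span_pair.mpr ⟨γ, δ * ∏ i ∈ t', Hf (A i) + β', ?_⟩
        linear_combination hp2 + (∏ i ∈ t', Hf (A i)) * hγδ
      · refine le_inf ?_ ?_ <;> rw [Ideal.span_le] <;> rintro x (rfl | rfl)
        · exact Ideal.mul_mem_right _ _ (Ideal.subset_span (Set.mem_insert _ _))
        · exact Ideal.subset_span (Set.mem_insert_of_mem _ rfl)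
        · exact Ideal.mul_mem_left _ _ (Ideal.subset_span (Set.mem_insert _ _))
        · exact Ideal.subset_span (Set.mem_insert_of_mem _ rfl)


/-- The ideal generated by the two products H_{A₁}⋯H_{A_h} and V_{B₁}⋯V_{B_v}
equals the defining ideal of the grid {Aᵢ×Bⱼ}. -/
theorem statement2 (h v : ℕ) (hh : 0 < h) (hv : 0 < v)
    (A : ℕ → ℂ × ℂ) (B : ℕ → ℂ × ℂ)
    (hA0 : ∀ i ∈ Finset.Icc 1 h, A i ≠ 0) (hB0 : ∀ j ∈ Finset.Icc 1 v, B j ≠ 0)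
    (hAd : ∀ i ∈ Finset.Icc 1 h, ∀ i' ∈ Finset.Icc 1 h, i ≠ i' → cross (A i) (A i') ≠ 0)
    (hBd : ∀ j ∈ Finset.Icc 1 v, ∀ j' ∈ Finset.Icc 1 v, j ≠ j' → cross (B j) (B j') ≠ 0) :
    Ideal.span {∏ i ∈ Finset.Icc 1 h, Hf (A i), ∏ j ∈ Finset.Icc 1 v, Vf (B j)} =
      ⨅ i ∈ Finset.Icc 1 h, ⨅ j ∈ Finset.Icc 1 v, Ipt (A i, B j) := by
  have inner : ∀ i ∈ Finset.Icc 1 h,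
      (⨅ j ∈ Finset.Icc 1 v, Ipt (A i, B j))
        = Ideal.span {Hf (A i), ∏ j ∈ Finset.Icc 1 v, Vf (B j)} := by
    intro i hi
    have := step1 (A i) (hA0 i hi) B (Finset.Icc 1 v) hB0 hBd
    rw [← this]
    rfl
  calc Ideal.span {∏ i ∈ Finset.Icc 1 h, Hf (A i), ∏ j ∈ Finset.Icc 1 v, Vf (B j)}
      = ⨅ i ∈ Finset.Icc 1 h, Ideal.span {Hf (A i), ∏ j ∈ Finset.Icc 1 v, Vf (B j)} :=
        (step2 A B (Finset.Icc 1 h) (Finset.Icc 1 v) hA0 hAd hB0 hBd).symm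
    _ = ⨅ i ∈ Finset.Icc 1 h, ⨅ j ∈ Finset.Icc 1 v, Ipt (A i, B j) := by
        refine iInf_congr fun i => ?_
        refine iInf_congr fun hi => ?_
        exact (inner i hi).symm
end
end

section
/- Fix r ≥ 1, pairwise distinct points A₁,…,A_{t_r} of ℙ¹ with forms Hᵢ and pairwise distinct points B₁,…,B_{s_r} of ℙ¹ with forms Vⱼ, and two collections of integers 0 < t₁ < ⋯ < t_r, 0 < t′₁ < ⋯ < t′_{r−1} < t′_r = t_r and 0 < s₁ < ⋯ < s_r, 0 < s′₁ < ⋯ < s′_{r−1} < s′_r = s_r. Let I = Ideal.span of the staircase generators built from (tᵢ, sᵢ) and J = Ideal.span of the staircase generators built from (t′ᵢ, s′ᵢ) (both using the same forms Hᵢ, Vⱼ), with associated exponent sequences α and α′ respectively. Then I ⊓ J = ⋂_{i=1}^{t_r} ⋂_{j=1}^{max(αᵢ, α′ᵢ)} ⟨Hᵢ, Vⱼ⟩; in particular I ⊓ J is the defining ideal of an ACM set of points of ℙ¹×ℙ¹ (the Ferrers configuration with exponents max(αᵢ, α′ᵢ)). -/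
/- Common setup: R = ℂ[x₀,x₁,y₀,y₁] as MvPolynomial (Fin 4) ℂ with
   x₀ = X 0, x₁ = X 1, y₀ = X 2, y₁ = X 3.
   `Hf a` is the horizontal form a₁x₀ - a₀x₁ of the point a = [a₀:a₁] ∈ ℙ¹;
   `Vf b` is the vertical form b₁y₀ - b₀y₁;
   `cross a b ≠ 0` says the (nonzero) pairs a, b are non-proportional,
   i.e. define distinct points of ℙ¹. -/

open MvPolynomial

noncomputable section

/-- Staircase data: r ≥ 1, 0 = t₀ < t₁ < ⋯ < t_r, 0 = s₀ < s₁ < ⋯ < s_r,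
    pairwise distinct points A₁,…,A_{t_r} of ℙ¹ and pairwise distinct points
    B₁,…,B_{s_r} of ℙ¹ (all indexed starting at 1). -/
structure Staircase where
  r : ℕ
  t : ℕ → ℕ
  s : ℕ → ℕ
  A : ℕ → ℂ × ℂ
  B : ℕ → ℂ × ℂ
  hr : 1 ≤ r
  ht0 : t 0 = 0
  hs0 : s 0 = 0
  ht : ∀ k, k < r → t k < t (k + 1)
  hs : ∀ k, k < r → s k < s (k + 1)
  hA0 : ∀ i ∈ Finset.Icc 1 (t r), A i ≠ 0
  hB0 : ∀ j ∈ Finset.Icc 1 (s r), B j ≠ 0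
  hAd : ∀ i ∈ Finset.Icc 1 (t r), ∀ i' ∈ Finset.Icc 1 (t r), i ≠ i' → cross (A i) (A i') ≠ 0
  hBd : ∀ j ∈ Finset.Icc 1 (s r), ∀ j' ∈ Finset.Icc 1 (s r), j ≠ j' → cross (B j) (B j') ≠ 0

/-- The staircase generator f_k = H₁⋯H_{t_k} · V₁⋯V_{s_{r-k}}. -/
def stairGen (S : Staircase) (k : ℕ) : R :=
  (∏ i ∈ Finset.Icc 1 (S.t k), Hf (S.A i)) * ∏ j ∈ Finset.Icc 1 (S.s (S.r - k)), Vf (S.B j)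

namespace Stair4

lemma exists_compl {a : ℂ × ℂ} (ha : a ≠ 0) : ∃ a' : ℂ × ℂ, a.1 * a'.2 - a.2 * a'.1 = 1 := by
  rcases eq_or_ne a.1 0 with h1 | h1
  · have h2 : a.2 ≠ 0 := fun h2 => ha (Prod.ext h1 h2)
    exact ⟨(-a.2⁻¹, 0), by field_simp [h1]; ring⟩
  · exact ⟨(0, a.1⁻¹), by field_simp; ring⟩

def phi (a b : ℂ × ℂ) : R →ₐ[ℂ] MvPolynomial (Fin 2) ℂ :=
  aeval ![C a.1 * X 0, C a.2 * X 0, C b.1 * X 1, C b.2 * X 1]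

lemma phi_Hf (a b c : ℂ × ℂ) : phi a b (Hf c) = C (cross a c) * X 0 := by
  simp only [phi, Hf, cross, map_sub, map_mul, aeval_C, aeval_X, algebraMap_eq]
  simp [Matrix.cons_val_zero, Matrix.cons_val_one]
  ring

lemma phi_Vf (a b d : ℂ × ℂ) : phi a b (Vf d) = C (cross b d) * X 1 := by
  simp only [phi, Vf, cross, map_sub, map_mul, aeval_C, aeval_X, algebraMap_eq]
  simp
  ring

def sig (a' b' : ℂ × ℂ) : MvPolynomial (Fin 2) ℂ →ₐ[ℂ] R := aeval ![Hf a', Vf b']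

lemma sub_sig_phi_mem (a b a' b' : ℂ × ℂ) (ha : a.1 * a'.2 - a.2 * a'.1 = 1)
    (hb : b.1 * b'.2 - b.2 * b'.1 = 1) (f : R) :
    f - sig a' b' (phi a b f) ∈ Ideal.span {Hf a, Vf b} := by
  have hC : (C a.1 * C a'.2 - C a.2 * C a'.1 : R) = 1 := by
    rw [← C_mul, ← C_mul, ← C_sub, ha, C_1]
  have hCb : (C b.1 * C b'.2 - C b.2 * C b'.1 : R) = 1 := by
    rw [← C_mul, ← C_mul, ← C_sub, hb, C_1]
  have hHmem : Hf a ∈ Ideal.span {Hf a, Vf b} :=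
    Ideal.subset_span (Set.mem_insert _ _)
  have hVmem : Vf b ∈ Ideal.span {Hf a, Vf b} :=
    Ideal.subset_span (Set.mem_insert_of_mem _ rfl)
  have k0 : (X 0 : R) - sig a' b' (phi a b (X 0)) ∈ Ideal.span {Hf a, Vf b} := by
    have h : (X 0 : R) - sig a' b' (phi a b (X 0)) = C (-a'.1) * Hf a := by
      simp only [phi, sig, aeval_X, map_mul, aeval_C, algebraMap_eq, Hf]
      simp
      linear_combination (-(X 0 : R)) * hC
    rw [h]; exact Ideal.mul_mem_left _ _ hHmem
  have k1 : (X 1 : R) - sig a' b' (phi a b (X 1)) ∈ Ideal.span {Hf a, Vf b} := by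
    have h : (X 1 : R) - sig a' b' (phi a b (X 1)) = C (-a'.2) * Hf a := by
      simp only [phi, sig, aeval_X, map_mul, aeval_C, algebraMap_eq, Hf]
      simp
      linear_combination (-(X 1 : R)) * hC
    rw [h]; exact Ideal.mul_mem_left _ _ hHmem
  have k2 : (X 2 : R) - sig a' b' (phi a b (X 2)) ∈ Ideal.span {Hf a, Vf b} := by
    have h : (X 2 : R) - sig a' b' (phi a b (X 2)) = C (-b'.1) * Vf b := by
      simp only [phi, sig, aeval_X, map_mul, aeval_C, algebraMap_eq, Vf]
      simp
      linear_combination (-(X 2 : R)) * hCb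
    rw [h]; exact Ideal.mul_mem_left _ _ hVmem
  have k3 : (X 3 : R) - sig a' b' (phi a b (X 3)) ∈ Ideal.span {Hf a, Vf b} := by
    have h : (X 3 : R) - sig a' b' (phi a b (X 3)) = C (-b'.2) * Vf b := by
      simp only [phi, sig, aeval_X, map_mul, aeval_C, algebraMap_eq, Vf]
      simp
      linear_combination (-(X 3 : R)) * hCb
    rw [h]; exact Ideal.mul_mem_left _ _ hVmem
  have key : ∀ i : Fin 4, X i - sig a' b' (phi a b (X i)) ∈ Ideal.span {Hf a, Vf b} := by
    intro i
    match i with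
    | 0 => exact k0
    | 1 => exact k1
    | 2 => exact k2
    | 3 => exact k3
  induction f using MvPolynomial.induction_on with
  | C c => simp [sig, phi, algebraMap_eq]
  | add p q hp hq =>
      have heq : (p + q) - sig a' b' (phi a b (p + q)) =
          (p - sig a' b' (phi a b p)) + (q - sig a' b' (phi a b q)) := by
        rw [map_add, map_add]; ring
      rw [heq]; exact Ideal.add_mem _ hp hq
  | mul_X p i hp =>
      have heq : p * X i - sig a' b' (phi a b (p * X i)) =
          (p - sig a' b' (phi a b p)) * X i +
            sig a' b' (phi a b p) * (X i - sig a' b' (phi a b (X i))) := by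
        rw [map_mul, map_mul]; ring
      rw [heq]
      exact Ideal.add_mem _ (Ideal.mul_mem_right _ _ hp) (Ideal.mul_mem_left _ _ (key i))

lemma mem_span_iff {a b : ℂ × ℂ} (ha : a ≠ 0) (hb : b ≠ 0) (f : R) :
    f ∈ Ideal.span {Hf a, Vf b} ↔ phi a b f = 0 := by
  obtain ⟨a', ha'⟩ := exists_compl ha
  obtain ⟨b', hb'⟩ := exists_compl hb
  constructor
  · intro hf
    have hle : Ideal.span {Hf a, Vf b} ≤ RingHom.ker (phi a b).toRingHom := by
      rw [Ideal.span_le]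
      rintro g (rfl | rfl)
      · show phi a b (Hf a) = 0
        rw [phi_Hf]
        simp [cross, mul_comm]
      · show phi a b (Vf b) = 0
        rw [phi_Vf]
        simp [cross, mul_comm]
    exact hle hf
  · intro h0
    have := sub_sig_phi_mem a b a' b' ha' hb' f
    rw [h0] at this
    simpa using this

lemma span_isPrime {a b : ℂ × ℂ} (ha : a ≠ 0) (hb : b ≠ 0) :
    (Ideal.span {Hf a, Vf b}).IsPrime := by
  have h : Ideal.span {Hf a, Vf b} = RingHom.ker (phi a b).toRingHom := by
    ext f
    rw [mem_span_iff ha hb]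
    rfl
  rw [h]
  exact RingHom.ker_isPrime _

lemma Hf_not_mem {a b c : ℂ × ℂ} (ha : a ≠ 0) (hb : b ≠ 0) (hc : cross a c ≠ 0) :
    Hf c ∉ Ideal.span {Hf a, Vf b} := by
  rw [mem_span_iff ha hb, phi_Hf]
  exact mul_ne_zero (fun h => hc (by simpa using h)) (X_ne_zero _)

lemma Vf_not_mem {a b d : ℂ × ℂ} (ha : a ≠ 0) (hb : b ≠ 0) (hd : cross b d ≠ 0) :
    Vf d ∉ Ideal.span {Hf a, Vf b} := by
  rw [mem_span_iff ha hb, phi_Vf]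
  exact mul_ne_zero (fun h => hd (by simpa using h)) (X_ne_zero _)



/-- Product of the first m vertical forms. -/
def Pv (b : ℕ → ℂ × ℂ) (m : ℕ) : R := ∏ j ∈ Finset.Icc 1 m, Vf (b j)

lemma Pv_zero (b : ℕ → ℂ × ℂ) : Pv b 0 = 1 := by simp [Pv]

lemma Pv_succ (b : ℕ → ℂ × ℂ) (m : ℕ) : Pv b (m + 1) = Pv b m * Vf (b (m + 1)) := by
  simpa [Pv] using Finset.prod_Icc_succ_top (Nat.one_le_iff_ne_zero.mpr (Nat.succ_ne_zero m)) (fun j => Vf (b j))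

lemma Pv_dvd (b : ℕ → ℂ × ℂ) {m m' : ℕ} (h : m ≤ m') : Pv b m ∣ Pv b m' :=
  Finset.prod_dvd_prod_of_subset _ _ _ (Finset.Icc_subset_Icc_right h)

lemma Vf_dvd_Pv (b : ℕ → ℂ × ℂ) {j m : ℕ} (h1 : 1 ≤ j) (h2 : j ≤ m) : Vf (b j) ∣ Pv b m :=
  Finset.dvd_prod_of_mem _ (Finset.mem_Icc.mpr ⟨h1, h2⟩)

lemma dvd_mem_left {x y z : R} (h : x ∣ z) : z ∈ Ideal.span {x, y} := by
  obtain ⟨c, rfl⟩ := h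
  exact Ideal.mem_span_pair.mpr ⟨c, 0, by ring⟩

lemma dvd_mem_right {x y z : R} (h : y ∣ z) : z ∈ Ideal.span {x, y} := by
  obtain ⟨c, rfl⟩ := h
  exact Ideal.mem_span_pair.mpr ⟨0, c, by ring⟩

lemma mem_finsetInf {s : Finset ℕ} {f : ℕ → Ideal R} {x : R} :
    x ∈ s.inf f ↔ ∀ i ∈ s, x ∈ f i := by
  simp [Finset.inf_eq_iInf, Submodule.mem_iInf]

lemma Icc_succ (m : ℕ) : Finset.Icc 1 (m + 1) = insert (m + 1) (Finset.Icc 1 m) := by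
  ext x
  simp only [Finset.mem_Icc, Finset.mem_insert]
  omega

/-- Single column: ⋂_{j=1}^m ⟨H, V_j⟩ = ⟨H, V_1⋯V_m⟩. -/
lemma col_inter (a : ℂ × ℂ) (ha : a ≠ 0) (b : ℕ → ℂ × ℂ) :
    ∀ m : ℕ, (∀ j ∈ Finset.Icc 1 m, b j ≠ 0) →
    (∀ j ∈ Finset.Icc 1 m, ∀ j' ∈ Finset.Icc 1 m, j ≠ j' → cross (b j) (b j') ≠ 0) →
    (Finset.Icc 1 m).inf (fun j => Ideal.span {Hf a, Vf (b j)}) = Ideal.span {Hf a, Pv b m}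
  | 0, _, _ => by
      have : (Finset.Icc 1 0 : Finset ℕ) = ∅ := rfl
      rw [this, Finset.inf_empty, Pv_zero, eq_comm, Ideal.eq_top_iff_one]
      exact Ideal.subset_span (Set.mem_insert_of_mem _ rfl)
  | m + 1, hb0, hbd => by
      have hsub : Finset.Icc 1 m ⊆ Finset.Icc 1 (m + 1) :=
        Finset.Icc_subset_Icc_right (Nat.le_succ m)
      have hmem1 : m + 1 ∈ Finset.Icc 1 (m + 1) := Finset.mem_Icc.mpr ⟨Nat.succ_le_succ (Nat.zero_le m), le_rfl⟩
      have IH := col_inter a ha b m (fun j hj => hb0 j (hsub hj))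
        (fun j hj j' hj' hne => hbd j (hsub hj) j' (hsub hj') hne)
      rw [Icc_succ, Finset.inf_insert, IH]
      have hbm1 : b (m + 1) ≠ 0 := hb0 _ hmem1
      have hprime := span_isPrime ha hbm1
      apply le_antisymm
      · intro f hf
        obtain ⟨hf1, hf2⟩ := Submodule.mem_inf.mp hf
        obtain ⟨u, v, huv⟩ := Ideal.mem_span_pair.mp hf2
        have hPm : Pv b m ∉ Ideal.span {Hf a, Vf (b (m + 1))} := by
          intro hmemP
          obtain ⟨j, hj, hVj⟩ := (hprime.prod_mem_iff).mp hmemP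
          have hj' := Finset.mem_Icc.mp hj
          exact Vf_not_mem ha hbm1
            (hbd (m+1) hmem1 j (hsub hj) (by omega)) hVj
        have hvP : v * Pv b m ∈ Ideal.span {Hf a, Vf (b (m + 1))} := by
          have heq : v * Pv b m = f - u * Hf a := by linear_combination huv
          rw [heq]
          exact sub_mem hf1 (Ideal.mul_mem_left _ _ (Ideal.subset_span (Set.mem_insert _ _)))
        have hv : v ∈ Ideal.span {Hf a, Vf (b (m + 1))} :=
          (hprime.mem_or_mem hvP).resolve_right hPm
        obtain ⟨c, d, hcd⟩ := Ideal.mem_span_pair.mp hv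
        refine Ideal.mem_span_pair.mpr ⟨u + c * Pv b m, d, ?_⟩
        rw [Pv_succ]
        linear_combination huv + Pv b m * hcd
      · apply le_inf
        · rw [Ideal.span_le]
          rintro g (rfl | rfl)
          · exact Ideal.subset_span (Set.mem_insert _ _)
          · exact dvd_mem_right ⟨Pv b m, by rw [Pv_succ]; ring⟩
        · rw [Ideal.span_le]
          rintro g (rfl | rfl)
          · exact Ideal.subset_span (Set.mem_insert _ _)
          · exact dvd_mem_right (Pv_dvd b (Nat.le_succ m))



/-- Product of the first c horizontal forms. -/
def Ph (a : ℕ → ℂ × ℂ) (c : ℕ) : R := ∏ i ∈ Finset.Icc 1 c, Hf (a i)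

lemma Ph_zero (a : ℕ → ℂ × ℂ) : Ph a 0 = 1 := by simp [Ph]

lemma Icc_one_eq_Ioc (c : ℕ) : Finset.Icc 1 c = Finset.Ioc 0 c := by
  ext x; simp only [Finset.mem_Icc, Finset.mem_Ioc]; omega

lemma Ph_split (a : ℕ → ℂ × ℂ) {d c : ℕ} (h : d ≤ c) :
    Ph a c = Ph a d * ∏ i ∈ Finset.Ioc d c, Hf (a i) := by
  rw [Ph, Ph, Icc_one_eq_Ioc, Icc_one_eq_Ioc,
    ← Finset.prod_Ioc_consecutive _ (Nat.zero_le d) h]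

lemma Hf_dvd_Ph (a : ℕ → ℂ × ℂ) {i c : ℕ} (h1 : 1 ≤ i) (h2 : i ≤ c) : Hf (a i) ∣ Ph a c :=
  Finset.dvd_prod_of_mem _ (Finset.mem_Icc.mpr ⟨h1, h2⟩)

lemma Ph_shift (a : ℕ → ℂ × ℂ) (c : ℕ) :
    Hf (a 1) * ∏ i ∈ Finset.Icc 1 c, Hf (a (i + 1)) = Ph a (c + 1) := by
  have h1 : ∏ i ∈ Finset.Icc 1 c, Hf (a (i + 1)) = ∏ i ∈ Finset.Icc 2 (c + 1), Hf (a i) := by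
    rw [show (2 : ℕ) = 1 + 1 from rfl, show c + 1 = c + 1 from rfl, ← Finset.map_add_right_Icc,
      Finset.prod_map]
    rfl
  have h2 : Finset.Icc 1 (c + 1) = insert 1 (Finset.Icc 2 (c + 1)) := by
    ext x; simp only [Finset.mem_Icc, Finset.mem_insert]; omega
  rw [h1, Ph, h2, Finset.prod_insert (by simp)]


/-- The staircase generator in abstract form. -/
def sg (a b : ℕ → ℂ × ℂ) (e : ℕ → ℕ) (c : ℕ) : R := Ph a c * Pv b (e c)

lemma core_le (n : ℕ) (a b : ℕ → ℂ × ℂ) (e : ℕ → ℕ)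
    (hmono : ∀ c d : ℕ, c ≤ d → d ≤ n → e d ≤ e c) :
    Ideal.span (sg a b e '' Set.Iic n) ≤
      (Finset.Icc 1 n).inf (fun i => Ideal.span {Hf (a i), Pv b (e (i - 1))}) := by
  rw [Ideal.span_le]
  rintro _ ⟨c, hc, rfl⟩
  rw [SetLike.mem_coe, mem_finsetInf]
  intro i hi
  obtain ⟨hi1, hin⟩ := Finset.mem_Icc.mp hi
  rcases le_or_gt i c with h | h
  · exact dvd_mem_left ((Hf_dvd_Ph a hi1 h).mul_right _)
  · refine dvd_mem_right ((Pv_dvd b ?_).mul_left _)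
    exact hmono c (i - 1) (by omega) (by omega)

lemma core (b : ℕ → ℂ × ℂ) (m : ℕ)
    (hb0 : ∀ j ∈ Finset.Icc 1 m, b j ≠ 0)
    (hbd : ∀ j ∈ Finset.Icc 1 m, ∀ j' ∈ Finset.Icc 1 m, j ≠ j' → cross (b j) (b j') ≠ 0) :
    ∀ n : ℕ, ∀ a : ℕ → ℂ × ℂ, ∀ e : ℕ → ℕ,
    (∀ i ∈ Finset.Icc 1 n, a i ≠ 0) →
    (∀ i ∈ Finset.Icc 1 n, ∀ i' ∈ Finset.Icc 1 n, i ≠ i' → cross (a i) (a i') ≠ 0) →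
    (∀ c d : ℕ, c ≤ d → d ≤ n → e d ≤ e c) → e n = 0 → (∀ c : ℕ, c ≤ n → e c ≤ m) →
    Ideal.span (sg a b e '' Set.Iic n) =
      (Finset.Icc 1 n).inf (fun i => Ideal.span {Hf (a i), Pv b (e (i - 1))})
  | 0, a, e, _, _, _, he0, _ => by
      have hIic : Set.Iic (0 : ℕ) = {0} := by
        ext x; simp [Nat.le_zero]
      have : (Finset.Icc 1 0 : Finset ℕ) = ∅ := rfl
      rw [this, Finset.inf_empty, hIic, Set.image_singleton, Ideal.eq_top_iff_one]
      have : sg a b e 0 = 1 := by simp [sg, Ph_zero, he0, Pv_zero]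
      rw [← this]
      exact Ideal.subset_span rfl
  | n + 1, a, e, ha0, had, hmono, he0, hem => by
      apply le_antisymm (core_le (n + 1) a b e hmono)
      intro f hf
      rw [mem_finsetInf] at hf
      -- decompose f in the first column ideal
      have h1mem : (1 : ℕ) ∈ Finset.Icc 1 (n + 1) := Finset.mem_Icc.mpr ⟨le_rfl, by omega⟩
      obtain ⟨u, v, huv⟩ := Ideal.mem_span_pair.mp (by simpa using hf 1 h1mem)
      -- u lies in all the other column ideals
      have hu : ∀ i, 2 ≤ i → i ≤ n + 1 → u ∈ Ideal.span {Hf (a i), Pv b (e (i - 1))} := by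
        intro i hi2 hin
        have himem : i ∈ Finset.Icc 1 (n + 1) := Finset.mem_Icc.mpr ⟨by omega, hin⟩
        have hai : a i ≠ 0 := ha0 i himem
        have heim : e (i - 1) ≤ m := hem (i - 1) (by omega)
        rw [← col_inter (a i) hai b (e (i - 1))
          (fun j hj => hb0 j (Finset.Icc_subset_Icc_right heim hj))
          (fun j hj j' hj' hne => hbd j (Finset.Icc_subset_Icc_right heim hj)
            j' (Finset.Icc_subset_Icc_right heim hj') hne), mem_finsetInf]
        intro j hj
        obtain ⟨hj1, hje⟩ := Finset.mem_Icc.mp hj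
        have hbj : b j ≠ 0 := hb0 j (Finset.mem_Icc.mpr ⟨hj1, hje.trans heim⟩)
        have hprime := span_isPrime hai hbj
        have hVdvd : Vf (b j) ∣ Pv b (e (i - 1)) := Vf_dvd_Pv b hj1 hje
        have hfmem : f ∈ Ideal.span {Hf (a i), Vf (b j)} := by
          have := hf i himem
          have hle : Ideal.span {Hf (a i), Pv b (e (i - 1))} ≤
              Ideal.span {Hf (a i), Vf (b j)} := by
            rw [Ideal.span_le]
            rintro g (rfl | rfl)
            · exact Ideal.subset_span (Set.mem_insert _ _)
            · exact dvd_mem_right hVdvd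
          exact hle this
        have hgmem : v * Pv b (e 0) ∈ Ideal.span {Hf (a i), Vf (b j)} := by
          refine Ideal.mul_mem_left _ _ (dvd_mem_right (hVdvd.trans (Pv_dvd b ?_)))
          exact hmono 0 (i - 1) (by omega) (by omega)
        have huH : u * Hf (a 1) ∈ Ideal.span {Hf (a i), Vf (b j)} := by
          have heq : u * Hf (a 1) = f - v * Pv b (e 0) := by linear_combination huv
          rw [heq]; exact sub_mem hfmem hgmem
        have hH1 : Hf (a 1) ∉ Ideal.span {Hf (a i), Vf (b j)} :=
          Hf_not_mem hai hbj (had i himem 1 h1mem (by omega))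
        exact (hprime.mem_or_mem huH).resolve_right hH1
      -- apply the induction hypothesis to the shifted data
      have IH := core b m hb0 hbd n (fun i => a (i + 1)) (fun c => e (c + 1))
        (fun i hi => ha0 (i + 1) (by 
          obtain ⟨h1, h2⟩ := Finset.mem_Icc.mp hi
          exact Finset.mem_Icc.mpr ⟨by omega, by omega⟩))
        (fun i hi i' hi' hne => by
          obtain ⟨h1, h2⟩ := Finset.mem_Icc.mp hi
          obtain ⟨h1', h2'⟩ := Finset.mem_Icc.mp hi'
          exact had (i + 1) (Finset.mem_Icc.mpr ⟨by omega, by omega⟩)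
            (i' + 1) (Finset.mem_Icc.mpr ⟨by omega, by omega⟩) (by omega))
        (fun c d hcd hdn => hmono (c + 1) (d + 1) (by omega) (by omega))
        he0 (fun c hc => hem (c + 1) (by omega))
      have humem : u ∈ Ideal.span (sg (fun i => a (i + 1)) b (fun c => e (c + 1)) '' Set.Iic n) := by
        rw [IH, mem_finsetInf]
        intro i hi
        obtain ⟨hi1, hin⟩ := Finset.mem_Icc.mp hi
        have := hu (i + 1) (by omega) (by omega)
        simpa [show i + 1 - 1 = i from rfl, show i - 1 + 1 = i by omega] using this
      -- transport along multiplication by Hf (a 1)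
      have hmul : Hf (a 1) * u ∈ Ideal.span (sg a b e '' Set.Iic (n + 1)) := by
        refine Submodule.span_induction ?_ ?_ ?_ ?_ humem
        · rintro _ ⟨c, hc, rfl⟩
          have hkey : Hf (a 1) * sg (fun i => a (i + 1)) b (fun c => e (c + 1)) c
              = sg a b e (c + 1) := by
            simp only [sg, Ph]
            rw [← mul_assoc, Ph_shift]
            rfl
          rw [hkey]
          exact Ideal.subset_span ⟨c + 1, by simpa using Nat.succ_le_succ hc, rfl⟩
        · simp
        · intro x y _ _ hx hy
          rw [mul_add]; exact Ideal.add_mem _ hx hy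
        · intro r x _ hx
          rw [smul_eq_mul, show Hf (a 1) * (r * x) = r * (Hf (a 1) * x) by ring]
          exact Ideal.mul_mem_left _ _ hx
      -- conclude
      have hvmem : v * Pv b (e 0) ∈ Ideal.span (sg a b e '' Set.Iic (n + 1)) := by
        refine Ideal.mul_mem_left _ _ (Ideal.subset_span ⟨0, Set.mem_Iic.mpr (Nat.zero_le _), ?_⟩)
        simp [sg, Ph_zero]
      have : f = Hf (a 1) * u + v * Pv b (e 0) := by linear_combination -huv
      rw [this]
      exact Ideal.add_mem _ hmul hvmem


lemma t_mono (t : ℕ → ℕ) (r : ℕ) (ht : ∀ k, k < r → t k < t (k + 1)) :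
    ∀ k k' : ℕ, k ≤ k' → k' ≤ r → t k ≤ t k' := by
  intro k k' h1 h2
  induction k' with
  | zero =>
    have hk0 : k = 0 := by omega
    rw [hk0]
  | succ n ih =>
    rcases Nat.lt_or_ge k (n + 1) with h | h
    · have h3 := ht n (by omega)
      have h4 := ih (by omega) (by omega)
      omega
    · have : k = n + 1 := by omega
      rw [this]

lemma exists_step (t : ℕ → ℕ) (ht0 : t 0 = 0) : ∀ r i : ℕ, 1 ≤ i → i ≤ t r →
    ∃ k, k < r ∧ t k < i ∧ i ≤ t (k + 1)
  | 0, i, h1, h2 => by rw [ht0] at h2; omega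
  | r + 1, i, h1, h2 => by
      rcases Nat.lt_or_ge (t r) i with h | h
      · exact ⟨r, Nat.lt_succ_self r, h, h2⟩
      · obtain ⟨k, hk, h3, h4⟩ := exists_step t ht0 r i h1 h
        exact ⟨k, by omega, h3, h4⟩

section StairData

variable (S : Staircase) (α : ℕ → ℕ)
  (hα : ∀ k, k < S.r → ∀ i, S.t k < i → i ≤ S.t (k + 1) → α i = S.s (S.r - k))

include hα

/-- For each column index there is a step. -/
lemma alpha_spec (i : ℕ) (h1 : 1 ≤ i) (h2 : i ≤ S.t S.r) :
    ∃ k, k < S.r ∧ α i = S.s (S.r - k) ∧ S.t k < i ∧ i ≤ S.t (k + 1) := by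
  obtain ⟨k, hk, h3, h4⟩ := exists_step S.t S.ht0 S.r i h1 h2
  exact ⟨k, hk, hα k hk i h3 h4, h3, h4⟩

lemma alpha_anti (i i' : ℕ) (h1 : 1 ≤ i) (h2 : i ≤ i') (h3 : i' ≤ S.t S.r) :
    α i' ≤ α i := by
  obtain ⟨k, hk, hv, hlo, hhi⟩ := alpha_spec S α hα i h1 (le_trans h2 h3)
  obtain ⟨k', hk', hv', hlo', hhi'⟩ := alpha_spec S α hα i' (by omega) h3
  have hkk : k ≤ k' := by
    by_contra hcon
    have : k' + 1 ≤ k := by omega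
    have := t_mono S.t S.r S.ht (k' + 1) k this (by omega)
    omega
  rw [hv, hv']
  exact t_mono S.s S.r S.hs (S.r - k') (S.r - k) (by omega) (by omega)

lemma alpha_le (i : ℕ) (h1 : 1 ≤ i) (h2 : i ≤ S.t S.r) : α i ≤ S.s S.r := by
  obtain ⟨k, hk, hv, _, _⟩ := alpha_spec S α hα i h1 h2
  rw [hv]
  exact t_mono S.s S.r S.hs (S.r - k) S.r (by omega) le_rfl

/-- The exponent function for the abstract staircase generators. -/
def eF (n : ℕ) (α : ℕ → ℕ) (c : ℕ) : ℕ := if c < n then α (c + 1) else 0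

lemma eF_mono (c d : ℕ) (hcd : c ≤ d) (hd : d ≤ S.t S.r) :
    eF (S.t S.r) α d ≤ eF (S.t S.r) α c := by
  unfold eF
  by_cases h : d < S.t S.r
  · rw [if_pos h, if_pos (by omega)]
    exact alpha_anti S α hα (c + 1) (d + 1) (by omega) (by omega) (by omega)
  · rw [if_neg h]
    exact Nat.zero_le _

lemma eF_top : eF (S.t S.r) α (S.t S.r) = 0 := if_neg (lt_irrefl _)

lemma eF_le (c : ℕ) (hc : c ≤ S.t S.r) : eF (S.t S.r) α c ≤ S.s S.r := by
  unfold eF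
  by_cases h : c < S.t S.r
  · rw [if_pos h]
    exact alpha_le S α hα (c + 1) (by omega) (by omega)
  · rw [if_neg h]
    exact Nat.zero_le _

lemma eF_col (i : ℕ) (h1 : 1 ≤ i) (h2 : i ≤ S.t S.r) : eF (S.t S.r) α (i - 1) = α i := by
  unfold eF
  rw [if_pos (by omega), Nat.sub_add_cancel h1]

lemma stairGen_eq (k : ℕ) (hk : k ≤ S.r) :
    stairGen S k = sg S.A S.B (eF (S.t S.r) α) (S.t k) := by
  have base : stairGen S k = Ph S.A (S.t k) * Pv S.B (S.s (S.r - k)) := rfl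
  rcases eq_or_lt_of_le hk with h | h
  · rw [base, sg, show S.r - k = 0 by omega, S.hs0,
      show S.t k = S.t S.r from by rw [h], eF_top S α hα]
  · have htk : S.t k < S.t S.r := by
      have h1 := S.ht k h
      have h2 := t_mono S.t S.r S.ht (k + 1) S.r (by omega) le_rfl
      omega
    have he : eF (S.t S.r) α (S.t k) = S.s (S.r - k) := by
      unfold eF
      rw [if_pos htk]
      exact hα k h (S.t k + 1) (Nat.lt_succ_self _) (S.ht k h)
    rw [base, sg, he]

lemma stair_span :
    Ideal.span (stairGen S '' Set.Iic S.r) =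
      Ideal.span (sg S.A S.B (eF (S.t S.r) α) '' Set.Iic (S.t S.r)) := by
  apply le_antisymm <;> rw [Ideal.span_le]
  · rintro _ ⟨k, hk, rfl⟩
    rw [SetLike.mem_coe, stairGen_eq S α hα k hk]
    exact Ideal.subset_span ⟨S.t k, t_mono S.t S.r S.ht k S.r hk le_rfl, rfl⟩
  · rintro _ ⟨c, hc, rfl⟩
    rw [SetLike.mem_coe]
    rcases eq_or_lt_of_le (Set.mem_Iic.mp hc) with h | h
    · have : sg S.A S.B (eF (S.t S.r) α) c = stairGen S S.r := by
        rw [stairGen_eq S α hα S.r le_rfl, h]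
      rw [this]
      exact Ideal.subset_span ⟨S.r, Set.mem_Iic.mpr le_rfl, rfl⟩
    · obtain ⟨k, hk, hlo, hhi⟩ := exists_step S.t S.ht0 S.r (c + 1) (by omega) (by omega)
      have htkc : S.t k ≤ c := by omega
      have he : eF (S.t S.r) α c = S.s (S.r - k) := by
        unfold eF
        rw [if_pos h]
        exact hα k hk (c + 1) (by omega) hhi
      have heq : sg S.A S.B (eF (S.t S.r) α) c =
          (∏ i ∈ Finset.Ioc (S.t k) c, Hf (S.A i)) * stairGen S k := by
        rw [sg, he, Ph_split S.A htkc, stairGen]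
        show _ = _ * (Ph S.A (S.t k) * Pv S.B (S.s (S.r - k)))
        ring
      rw [heq]
      exact Ideal.mul_mem_left _ _
        (Ideal.subset_span ⟨k, Set.mem_Iic.mpr (le_of_lt hk), rfl⟩)

end StairData


lemma inf_distrib (s : Finset ℕ) (f g : ℕ → Ideal R) :
    s.inf f ⊓ s.inf g = s.inf (fun i => f i ⊓ g i) := by
  apply le_antisymm
  · exact Finset.le_inf fun i hi => inf_le_inf (Finset.inf_le hi) (Finset.inf_le hi)
  · exact le_inf (Finset.le_inf fun i hi => (Finset.inf_le hi).trans inf_le_left)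
      (Finset.le_inf fun i hi => (Finset.inf_le hi).trans inf_le_right)

lemma Icc_union_max (p q : ℕ) :
    Finset.Icc 1 p ∪ Finset.Icc 1 q = Finset.Icc 1 (max p q) := by
  ext x
  simp only [Finset.mem_union, Finset.mem_Icc]
  omega

lemma col_max (a : ℂ × ℂ) (ha : a ≠ 0) (b : ℕ → ℂ × ℂ) (m p q : ℕ)
    (hp : p ≤ m) (hq : q ≤ m)
    (hb0 : ∀ j ∈ Finset.Icc 1 m, b j ≠ 0)
    (hbd : ∀ j ∈ Finset.Icc 1 m, ∀ j' ∈ Finset.Icc 1 m, j ≠ j' → cross (b j) (b j') ≠ 0) :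
    Ideal.span {Hf a, Pv b p} ⊓ Ideal.span {Hf a, Pv b q} =
      (Finset.Icc 1 (max p q)).inf (fun j => Ideal.span {Hf a, Vf (b j)}) := by
  rw [← col_inter a ha b p
      (fun j hj => hb0 j (Finset.Icc_subset_Icc_right hp hj))
      (fun j hj j' hj' hne => hbd j (Finset.Icc_subset_Icc_right hp hj)
        j' (Finset.Icc_subset_Icc_right hp hj') hne),
    ← col_inter a ha b q
      (fun j hj => hb0 j (Finset.Icc_subset_Icc_right hq hj))
      (fun j hj j' hj' hne => hbd j (Finset.Icc_subset_Icc_right hq hj)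
        j' (Finset.Icc_subset_Icc_right hq hj') hne),
    ← Finset.inf_union, Icc_union_max]

end Stair4

open Stair4

/-- Lemma 2.12: two staircase ideals built from the same points and lines (with the
same r, the same t_r and the same s_r) intersect in the defining ideal of the Ferrers
configuration with exponents max(αᵢ, α′ᵢ), an ACM set of points. -/
theorem statement4 (S S' : Staircase)
    (hrr : S.r = S'.r) (hAA : S.A = S'.A) (hBB : S.B = S'.B)
    (htr : S.t S.r = S'.t S'.r) (hsr : S.s S.r = S'.s S'.r)
    (α α' : ℕ → ℕ)
    (hα : ∀ k, k < S.r → ∀ i, S.t k < i → i ≤ S.t (k + 1) → α i = S.s (S.r - k))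
    (hα' : ∀ k, k < S'.r → ∀ i, S'.t k < i → i ≤ S'.t (k + 1) → α' i = S'.s (S'.r - k)) :
    Ideal.span (stairGen S '' Set.Iic S.r) ⊓ Ideal.span (stairGen S' '' Set.Iic S'.r) =
      ⨅ i ∈ Finset.Icc 1 (S.t S.r), ⨅ j ∈ Finset.Icc 1 (max (α i) (α' i)),
        Ipt (S.A i, S.B j) := by
  have hI : Ideal.span (stairGen S '' Set.Iic S.r) =
      (Finset.Icc 1 (S.t S.r)).inf
        (fun i => Ideal.span {Hf (S.A i), Pv S.B (eF (S.t S.r) α (i - 1))}) := by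
    rw [stair_span S α hα]
    exact core S.B (S.s S.r) S.hB0 S.hBd (S.t S.r) S.A (eF (S.t S.r) α)
      S.hA0 S.hAd (eF_mono S α hα) (eF_top S α hα) (eF_le S α hα)
  have hJ : Ideal.span (stairGen S' '' Set.Iic S'.r) =
      (Finset.Icc 1 (S.t S.r)).inf
        (fun i => Ideal.span {Hf (S.A i), Pv S.B (eF (S.t S.r) α' (i - 1))}) := by
    rw [stair_span S' α' hα']
    have hc := core S'.B (S'.s S'.r) S'.hB0 S'.hBd (S'.t S'.r) S'.A (eF (S'.t S'.r) α')
      S'.hA0 S'.hAd (eF_mono S' α' hα') (eF_top S' α' hα') (eF_le S' α' hα')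
    rw [hc, ← hAA, ← hBB, ← htr]
  rw [hI, hJ, inf_distrib]
  have hcols : ∀ i ∈ Finset.Icc 1 (S.t S.r),
      Ideal.span {Hf (S.A i), Pv S.B (eF (S.t S.r) α (i - 1))} ⊓
        Ideal.span {Hf (S.A i), Pv S.B (eF (S.t S.r) α' (i - 1))} =
      (Finset.Icc 1 (max (α i) (α' i))).inf (fun j => Ipt (S.A i, S.B j)) := by
    intro i hi
    obtain ⟨h1, h2⟩ := Finset.mem_Icc.mp hi
    have h2' : i ≤ S'.t S'.r := by rw [← htr]; exact h2
    have he1 : eF (S.t S.r) α (i - 1) = α i := eF_col S α hα i h1 h2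
    have he2 : eF (S.t S.r) α' (i - 1) = α' i := by
      have h := eF_col S' α' hα' i h1 h2'
      rw [← htr] at h
      exact h
    rw [he1, he2]
    have hq : α' i ≤ S.s S.r := by
      have h := alpha_le S' α' hα' i h1 h2'
      rwa [← hsr] at h
    rw [col_max (S.A i) (S.hA0 i hi) S.B (S.s S.r) (α i) (α' i)
      (alpha_le S α hα i h1 h2) hq S.hB0 S.hBd]
    rfl
  rw [Finset.inf_congr rfl hcols]
  simp only [Finset.inf_eq_iInf]
end
end

section
/- Let X be a Ferrers configuration of points of ℙ¹×ℙ¹ and let H = c₁x₀ − c₀x₁ with (c₀,c₁) ≠ (0,0) be any degree (1,0) form. Let X∖H = {P ∈ X : H ∉ I_P} be the set of points of X not lying on the line H = 0. Then ⟨H⟩ ⊓ I_X = ⟨H⟩ * I_{X∖H}, and X∖H is again a Ferrers configuration (or empty). The analogous statement holds for any degree (0,1) form V = c₁y₀ − c₀y₁: ⟨V⟩ ⊓ I_X = ⟨V⟩ * I_{X∖V}, with X∖V a Ferrers configuration (or empty). -/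
/- Common setup: R = ℂ[x₀,x₁,y₀,y₁] as MvPolynomial (Fin 4) ℂ with
   x₀ = X 0, x₁ = X 1, y₀ = X 2, y₁ = X 3.
   `Hf a` is the horizontal form a₁x₀ - a₀x₁ of the point a = [a₀:a₁] ∈ ℙ¹;
   `Vf b` is the vertical form b₁y₀ - b₀y₁;
   `cross a b ≠ 0` says the (nonzero) pairs a, b are non-proportional,
   i.e. define distinct points of ℙ¹. -/

open MvPolynomial

noncomputable section

/-- A Ferrers configuration {Aᵢ×Bⱼ : 1 ≤ i ≤ h, 1 ≤ j ≤ αᵢ} for pairwise distinct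
    points A₁,…,A_h of ℙ¹, pairwise distinct B₁,…,B_{α₁} of ℙ¹ and
    α₁ ≥ ⋯ ≥ α_h ≥ 1.  These are exactly the ACM finite sets of points of ℙ¹×ℙ¹. -/
def IsFerrers (W : Set ((ℂ × ℂ) × (ℂ × ℂ))) : Prop :=
  ∃ (h : ℕ) (α : ℕ → ℕ) (A B : ℕ → ℂ × ℂ),
    1 ≤ h ∧
    (∀ i, 1 ≤ i → i ≤ h → 1 ≤ α i) ∧
    (∀ i, 1 ≤ i → i + 1 ≤ h → α (i + 1) ≤ α i) ∧
    (∀ i, 1 ≤ i → i ≤ h → A i ≠ 0) ∧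
    (∀ j, 1 ≤ j → j ≤ α 1 → B j ≠ 0) ∧
    (∀ i i', 1 ≤ i → i ≤ h → 1 ≤ i' → i' ≤ h → i ≠ i' → cross (A i) (A i') ≠ 0) ∧
    (∀ j j', 1 ≤ j → j ≤ α 1 → 1 ≤ j' → j' ≤ α 1 → j ≠ j' → cross (B j) (B j') ≠ 0) ∧
    W = {P | ∃ i j, 1 ≤ i ∧ i ≤ h ∧ 1 ≤ j ∧ j ≤ α i ∧ P = (A i, B j)}

abbrev S2 : Type := MvPolynomial (Fin 2) ℂ

def phi (a b : ℂ × ℂ) : R →ₐ[ℂ] S2 :=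
  aeval ![C a.1 * X 0, C a.2 * X 0, C b.1 * X 1, C b.2 * X 1]

lemma phi_Hf (a b e : ℂ × ℂ) : phi a b (Hf e) = - C (cross e a) * X 0 := by
  simp [phi, Hf, cross]
  ring

lemma phi_Vf (a b e : ℂ × ℂ) : phi a b (Vf e) = - C (cross e b) * X 1 := by
  simp [phi, Vf, cross]
  ring

lemma Ipt_le_ker (a b : ℂ × ℂ) : Ipt (a, b) ≤ RingHom.ker (phi a b).toRingHom := by
  rw [Ipt, Ideal.span_le]
  rintro f (rfl | rfl)
  · simp [RingHom.mem_ker, phi_Hf, cross]; ring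
  · simp [RingHom.mem_ker, phi_Vf, cross]; ring

lemma pair_cases (a : ℂ × ℂ) (h : a ≠ 0) : a.1 ≠ 0 ∨ a.2 ≠ 0 := by
  by_contra hco
  push_neg at hco
  exact h (Prod.ext hco.1 hco.2)

lemma Hf_smul (c a : ℂ × ℂ) (ha : a ≠ 0) (h : cross c a = 0) :
    ∃ l : ℂ, Hf c = C l * Hf a := by
  simp only [cross] at h
  rcases pair_cases a ha with h1 | h2
  · refine ⟨c.1 / a.1, ?_⟩
    have e1 : c.1 = c.1 / a.1 * a.1 := by field_simp
    have e2 : c.2 = c.1 / a.1 * a.2 := by field_simp; linear_combination -h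
    rw [Hf, Hf, show (C c.2 : R) = C (c.1 / a.1) * C a.2 by rw [← map_mul, ← e2],
      show (C c.1 : R) = C (c.1 / a.1) * C a.1 by rw [← map_mul, ← e1]]
    ring
  · refine ⟨c.2 / a.2, ?_⟩
    have e1 : c.1 = c.2 / a.2 * a.1 := by field_simp; linear_combination h
    have e2 : c.2 = c.2 / a.2 * a.2 := by field_simp
    rw [Hf, Hf, show (C c.2 : R) = C (c.2 / a.2) * C a.2 by rw [← map_mul, ← e2],
      show (C c.1 : R) = C (c.2 / a.2) * C a.1 by rw [← map_mul, ← e1]]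
    ring

lemma Vf_smul (d b : ℂ × ℂ) (hb : b ≠ 0) (h : cross d b = 0) :
    ∃ l : ℂ, Vf d = C l * Vf b := by
  simp only [cross] at h
  rcases pair_cases b hb with h1 | h2
  · refine ⟨d.1 / b.1, ?_⟩
    have e1 : d.1 = d.1 / b.1 * b.1 := by field_simp
    have e2 : d.2 = d.1 / b.1 * b.2 := by field_simp; linear_combination -h
    rw [Vf, Vf, show (C d.2 : R) = C (d.1 / b.1) * C b.2 by rw [← map_mul, ← e2],
      show (C d.1 : R) = C (d.1 / b.1) * C b.1 by rw [← map_mul, ← e1]]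
    ring
  · refine ⟨d.2 / b.2, ?_⟩
    have e1 : d.1 = d.2 / b.2 * b.1 := by field_simp; linear_combination h
    have e2 : d.2 = d.2 / b.2 * b.2 := by field_simp
    rw [Vf, Vf, show (C d.2 : R) = C (d.2 / b.2) * C b.2 by rw [← map_mul, ← e2],
      show (C d.1 : R) = C (d.2 / b.2) * C b.1 by rw [← map_mul, ← e1]]
    ring

lemma Hf_mem_Ipt (P : (ℂ × ℂ) × (ℂ × ℂ)) (hP : P.1 ≠ 0) (c : ℂ × ℂ) :
    Hf c ∈ Ipt P ↔ cross c P.1 = 0 := by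
  constructor
  · intro hm
    have := Ipt_le_ker P.1 P.2 hm
    rw [RingHom.mem_ker] at this
    rw [AlgHom.toRingHom_eq_coe, RingHom.coe_coe, phi_Hf] at this
    have h2 : (C (cross c P.1) : S2) * X 0 = 0 := by
      rw [← neg_eq_zero]; rw [← this]; ring
    rcases mul_eq_zero.mp h2 with h3 | h3
    · exact (C_eq_zero).mp h3
    · exact absurd h3 (X_ne_zero 0)
  · intro h
    obtain ⟨l, hl⟩ := Hf_smul c P.1 hP h
    rw [hl]
    exact Ideal.mul_mem_left _ _ (Ideal.subset_span (by left; rfl))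

lemma Vf_mem_Ipt (P : (ℂ × ℂ) × (ℂ × ℂ)) (hP : P.2 ≠ 0) (d : ℂ × ℂ) :
    Vf d ∈ Ipt P ↔ cross d P.2 = 0 := by
  constructor
  · intro hm
    have := Ipt_le_ker P.1 P.2 hm
    rw [RingHom.mem_ker] at this
    rw [AlgHom.toRingHom_eq_coe, RingHom.coe_coe, phi_Vf] at this
    have h2 : (C (cross d P.2) : S2) * X 1 = 0 := by
      rw [← neg_eq_zero]; rw [← this]; ring
    rcases mul_eq_zero.mp h2 with h3 | h3
    · exact (C_eq_zero).mp h3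
    · exact absurd h3 (X_ne_zero 1)
  · intro h
    obtain ⟨l, hl⟩ := Vf_smul d P.2 hP h
    rw [hl]
    exact Ideal.mul_mem_left _ _ (Ideal.subset_span (by right; rfl))

def nn (a : ℂ × ℂ) : ℂ := a.1 * (starRingEnd ℂ) a.1 + a.2 * (starRingEnd ℂ) a.2

lemma nn_ne (a : ℂ × ℂ) (ha : a ≠ 0) : nn a ≠ 0 := by
  intro h
  rw [nn, Complex.mul_conj, Complex.mul_conj, ← Complex.ofReal_add,
    Complex.ofReal_eq_zero] at h
  have h1 := Complex.normSq_nonneg a.1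
  have h2 := Complex.normSq_nonneg a.2
  apply ha
  have e1 : Complex.normSq a.1 = 0 := by linarith
  have e2 : Complex.normSq a.2 = 0 := by linarith
  exact Prod.ext (Complex.normSq_eq_zero.mp e1) (Complex.normSq_eq_zero.mp e2)

def iota (a b : ℂ × ℂ) : S2 →ₐ[ℂ] R :=
  aeval ![C ((starRingEnd ℂ) a.1 / nn a) * X 0 + C ((starRingEnd ℂ) a.2 / nn a) * X 1,
          C ((starRingEnd ℂ) b.1 / nn b) * X 2 + C ((starRingEnd ℂ) b.2 / nn b) * X 3]

lemma sub_rho_mem (a b : ℂ × ℂ) (ha : a ≠ 0) (hb : b ≠ 0) (f : R) :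
    f - iota a b (phi a b f) ∈ Ipt (a, b) := by
  have hna := nn_ne a ha
  have hnb := nn_ne b hb
  have hHa : Hf a ∈ Ipt (a, b) := Ideal.subset_span (by left; rfl)
  have hVb : Vf b ∈ Ipt (a, b) := Ideal.subset_span (by right; rfl)
  have key : ∀ i : Fin 4, (X i : R) - iota a b (phi a b (X i)) ∈ Ipt (a, b) := by
    intro i
    fin_cases i
    · show (X 0 : R) - iota a b (phi a b (X 0)) ∈ Ipt (a, b)
      have s1 : (1 : ℂ) - a.1 * ((starRingEnd ℂ) a.1 / nn a) =
          (starRingEnd ℂ) a.2 / nn a * a.2 := by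
        field_simp
        rw [nn]
        ring
      have hs : (1 : R) - C a.1 * C ((starRingEnd ℂ) a.1 / nn a) =
          C ((starRingEnd ℂ) a.2 / nn a) * C a.2 := by
        simpa [map_sub, map_mul, map_one] using congrArg (C : ℂ → R) s1
      have heq : (X 0 : R) - iota a b (phi a b (X 0)) =
          C ((starRingEnd ℂ) a.2 / nn a) * Hf a := by
        simp only [phi, iota, aeval_X, Matrix.cons_val_zero, map_mul, map_add, aeval_C,
          algebraMap_eq, Hf]
        linear_combination (X 0 : R) * hs
      rw [heq]; exact Ideal.mul_mem_left _ _ hHa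
    · show (X 1 : R) - iota a b (phi a b (X 1)) ∈ Ipt (a, b)
      have s1 : (1 : ℂ) - a.2 * ((starRingEnd ℂ) a.2 / nn a) =
          (starRingEnd ℂ) a.1 / nn a * a.1 := by
        field_simp
        rw [nn]
        ring
      have hs : (1 : R) - C a.2 * C ((starRingEnd ℂ) a.2 / nn a) =
          C ((starRingEnd ℂ) a.1 / nn a) * C a.1 := by
        simpa [map_sub, map_mul, map_one] using congrArg (C : ℂ → R) s1
      have heq : (X 1 : R) - iota a b (phi a b (X 1)) =
          - C ((starRingEnd ℂ) a.1 / nn a) * Hf a := by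
        simp only [phi, iota, aeval_X, Matrix.cons_val_zero, Matrix.cons_val_one,
          Matrix.head_cons, map_mul, map_add, aeval_C, algebraMap_eq, Hf]
        linear_combination (X 1 : R) * hs
      rw [heq]; exact Ideal.mul_mem_left _ _ hHa
    · show (X 2 : R) - iota a b (phi a b (X 2)) ∈ Ipt (a, b)
      have s1 : (1 : ℂ) - b.1 * ((starRingEnd ℂ) b.1 / nn b) =
          (starRingEnd ℂ) b.2 / nn b * b.2 := by
        field_simp
        rw [nn]
        ring
      have hs : (1 : R) - C b.1 * C ((starRingEnd ℂ) b.1 / nn b) =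
          C ((starRingEnd ℂ) b.2 / nn b) * C b.2 := by
        simpa [map_sub, map_mul, map_one] using congrArg (C : ℂ → R) s1
      have heq : (X 2 : R) - iota a b (phi a b (X 2)) =
          C ((starRingEnd ℂ) b.2 / nn b) * Vf b := by
        simp only [phi, iota, aeval_X, Matrix.cons_val_zero, Matrix.cons_val_one,
          Matrix.head_cons, Matrix.cons_val_two, Matrix.tail_cons, map_mul, map_add,
          aeval_C, algebraMap_eq, Vf]
        linear_combination (X 2 : R) * hs
      rw [heq]; exact Ideal.mul_mem_left _ _ hVb
    · show (X 3 : R) - iota a b (phi a b (X 3)) ∈ Ipt (a, b)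
      have s1 : (1 : ℂ) - b.2 * ((starRingEnd ℂ) b.2 / nn b) =
          (starRingEnd ℂ) b.1 / nn b * b.1 := by
        field_simp
        rw [nn]
        ring
      have hs : (1 : R) - C b.2 * C ((starRingEnd ℂ) b.2 / nn b) =
          C ((starRingEnd ℂ) b.1 / nn b) * C b.1 := by
        simpa [map_sub, map_mul, map_one] using congrArg (C : ℂ → R) s1
      have heq : (X 3 : R) - iota a b (phi a b (X 3)) =
          - C ((starRingEnd ℂ) b.1 / nn b) * Vf b := by
        simp only [phi, iota, aeval_X, Matrix.cons_val_zero, Matrix.cons_val_one,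
          Matrix.head_cons, Matrix.cons_val_two, Matrix.tail_cons, Matrix.cons_val_three,
          map_mul, map_add, aeval_C, algebraMap_eq, Vf]
        linear_combination (X 3 : R) * hs
      rw [heq]; exact Ideal.mul_mem_left _ _ hVb
  induction f using MvPolynomial.induction_on with
  | C r => simp
  | add p q hp hq => simpa [map_add, sub_add_sub_comm] using Ideal.add_mem _ hp hq
  | mul_X p i hp =>
      have : p * X i - iota a b (phi a b (p * X i)) =
          (p - iota a b (phi a b p)) * X i +
          iota a b (phi a b p) * (X i - iota a b (phi a b (X i))) := by
        rw [map_mul, map_mul]; ring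
      rw [this]
      exact Ideal.add_mem _ (Ideal.mul_mem_right _ _ hp) (Ideal.mul_mem_left _ _ (key i))

lemma Ipt_prime_s5 (P : (ℂ × ℂ) × (ℂ × ℂ)) (h1 : P.1 ≠ 0) (h2 : P.2 ≠ 0) :
    (Ipt P).IsPrime := by
  have heq : Ipt P = RingHom.ker (phi P.1 P.2).toRingHom := by
    apply le_antisymm (Ipt_le_ker P.1 P.2)
    intro f hf
    rw [RingHom.mem_ker] at hf
    have := sub_rho_mem P.1 P.2 h1 h2 f
    rw [AlgHom.toRingHom_eq_coe, RingHom.coe_coe] at hf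
    rw [hf, map_zero, sub_zero] at this
    exact this
  rw [heq]
  exact RingHom.ker_isPrime _

lemma IptsSet_le {W : Set ((ℂ × ℂ) × (ℂ × ℂ))} {P} (hP : P ∈ W) : IptsSet W ≤ Ipt P :=
  iInf₂_le P hP

lemma mem_IptsSet {W : Set ((ℂ × ℂ) × (ℂ × ℂ))} {f : R} :
    f ∈ IptsSet W ↔ ∀ P ∈ W, f ∈ Ipt P := by
  simp [IptsSet, Submodule.mem_iInf]

lemma span_inf (H : R) (W : Set ((ℂ × ℂ) × (ℂ × ℂ)))
    (hpr : ∀ P ∈ W, (Ipt P).IsPrime) :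
    Ideal.span {H} ⊓ IptsSet W = Ideal.span {H} * IptsSet {P ∈ W | H ∉ Ipt P} := by
  apply le_antisymm
  · rintro g ⟨hg1, hg2⟩
    obtain ⟨r, hr⟩ := Ideal.mem_span_singleton'.mp hg1
    have hrmem : r ∈ IptsSet {P ∈ W | H ∉ Ipt P} := by
      rw [mem_IptsSet]
      rintro P ⟨hPW, hPH⟩
      have hg : r * H ∈ Ipt P := by rw [hr]; exact IptsSet_le hPW hg2
      rcases ((hpr P hPW).mem_or_mem hg) with h | h
      · exact h
      · exact absurd h hPH
    have hmm := Ideal.mul_mem_mul (Ideal.mem_span_singleton_self H) hrmem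
    rwa [show H * r = g by rw [← hr]; ring] at hmm
  · refine le_inf Ideal.mul_le_left ?_
    rw [IptsSet]
    refine le_iInf₂ fun P hP => ?_
    by_cases hH : H ∈ Ipt P
    · refine le_trans Ideal.mul_le_left ?_
      rw [Ideal.span_le, Set.singleton_subset_iff]
      exact hH
    · exact le_trans Ideal.mul_le_right (IptsSet_le (Set.mem_sep hP hH))

lemma alpha_mono (h : ℕ) (α : ℕ → ℕ) (hdec : ∀ i, 1 ≤ i → i + 1 ≤ h → α (i + 1) ≤ α i) :
    ∀ i i', 1 ≤ i → i ≤ i' → i' ≤ h → α i' ≤ α i := by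
  intro i i' hi1 hii' hi'h
  induction i' with
  | zero => omega
  | succ n ih =>
    rcases Nat.lt_or_ge i (n + 1) with hlt | hge
    · have h1 : α (n + 1) ≤ α n := hdec n (by omega) (by omega)
      have h2 : α n ≤ α i := ih (by omega) (by omega)
      omega
    · have : i = n + 1 := by omega
      rw [this]

lemma cross_trans (c a a' : ℂ × ℂ) (hc : c ≠ 0) (h1 : cross c a = 0)
    (h2 : cross c a' = 0) : cross a a' = 0 := by
  simp only [cross] at *
  rcases pair_cases c hc with h | h
  · apply mul_left_cancel₀ h
    rw [mul_zero]
    linear_combination a.1 * h2 - a'.1 * h1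
  · apply mul_left_cancel₀ h
    rw [mul_zero]
    linear_combination a.2 * h2 - a'.2 * h1

lemma down_closed (h : ℕ) (S : Finset ℕ) (hS : S ⊆ Finset.Icc 1 h)
    (hdc : ∀ i ∈ S, ∀ j, 1 ≤ j → j ≤ i → j ∈ S) : S = Finset.Icc 1 S.card := by
  ext i
  simp only [Finset.mem_Icc]
  constructor
  · intro hi
    have hi1 : 1 ≤ i := (Finset.mem_Icc.mp (hS hi)).1
    refine ⟨hi1, ?_⟩
    have hsub : Finset.Icc 1 i ⊆ S := by
      intro j hj
      rw [Finset.mem_Icc] at hj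
      exact hdc i hi j hj.1 hj.2
    calc i = (Finset.Icc 1 i).card := by rw [Nat.card_Icc]; omega
    _ ≤ S.card := Finset.card_le_card hsub
  · rintro ⟨hi1, hic⟩
    by_contra hiS
    have hsub : S ⊆ Finset.Icc 1 (i - 1) := by
      intro j hj
      rw [Finset.mem_Icc]
      have hj1 : 1 ≤ j := (Finset.mem_Icc.mp (hS hj)).1
      refine ⟨hj1, ?_⟩
      by_contra hji
      exact hiS (hdc j hj i hi1 (by omega))
    have := Finset.card_le_card hsub
    rw [Nat.card_Icc] at this
    omega

lemma ferrersH (W : Set ((ℂ × ℂ) × (ℂ × ℂ))) (hW : IsFerrers W) (c : ℂ × ℂ)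
    (hc : c ≠ 0) :
    {P ∈ W | Hf c ∉ Ipt P} = ∅ ∨ IsFerrers {P ∈ W | Hf c ∉ Ipt P} := by
  obtain ⟨h, α, A, B, hh, hα1, hαd, hA0, hB0, hAc, hBc, hWeq⟩ := hW
  by_cases hex : ∃ i₀, 1 ≤ i₀ ∧ i₀ ≤ h ∧ cross c (A i₀) = 0
  case neg =>
    push_neg at hex
    right
    refine ⟨h, α, A, B, hh, hα1, hαd, hA0, hB0, hAc, hBc, ?_⟩
    rw [← hWeq]
    ext P
    simp only [Set.mem_sep_iff, and_iff_left_iff_imp]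
    intro hPW
    rw [hWeq] at hPW
    obtain ⟨i, j, hi1, hih, hj1, hjα, hPe⟩ := hPW
    rw [hPe, Hf_mem_Ipt _ (hA0 i hi1 hih) c]
    exact hex i hi1 hih
  case pos =>
    obtain ⟨i₀, hi₀1, hi₀h, hcr⟩ := hex
    set sk : ℕ → ℕ := fun i => if i < i₀ then i else i + 1 with hsk
    have Seq : {P ∈ W | Hf c ∉ Ipt P} =
        {P | ∃ i j, 1 ≤ i ∧ i ≤ h - 1 ∧ 1 ≤ j ∧ j ≤ (fun i => α (sk i)) i ∧
          P = ((fun i => A (sk i)) i, B j)} := by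
      ext P
      simp only [Set.mem_sep_iff, Set.mem_setOf_eq]
      constructor
      · rintro ⟨hPW, hPH⟩
        rw [hWeq] at hPW
        obtain ⟨i, j, hi1, hih, hj1, hjα, hPe⟩ := hPW
        have hcri : cross c (A i) ≠ 0 := by
          intro h0
          exact hPH (hPe ▸ (Hf_mem_Ipt (A i, B j) (hA0 i hi1 hih) c).mpr h0)
        have hne : i ≠ i₀ := fun hco => hcri (hco ▸ hcr)
        rcases Nat.lt_or_ge i i₀ with hlt | hge
        · have hski : sk i = i := by simp only [hsk]; split <;> omega
          exact ⟨i, j, hi1, by omega, hj1, by rw [hski]; exact hjα,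
            by rw [hski]; exact hPe⟩
        · have hgt : i₀ < i := by omega
          have hski : sk (i - 1) = i := by simp only [hsk]; split <;> omega
          exact ⟨i - 1, j, by omega, by omega, hj1, by rw [hski]; exact hjα,
            by rw [hski]; exact hPe⟩
      · rintro ⟨i, j, hi1, hih, hj1, hjα, hPe⟩
        have hb : i ≤ sk i ∧ sk i ≤ i + 1 := by simp only [hsk]; split <;> omega
        have hne : sk i ≠ i₀ := by simp only [hsk]; split <;> omega
        have h1k : 1 ≤ sk i := by omega
        have hkh : sk i ≤ h := by omega
        constructor
        · rw [hWeq]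
          exact ⟨sk i, j, h1k, hkh, hj1, hjα, hPe⟩
        · rw [hPe, Hf_mem_Ipt _ (hA0 (sk i) h1k hkh) c]
          intro h0
          exact hAc (sk i) i₀ h1k hkh hi₀1 hi₀h hne (cross_trans c _ _ hc h0 hcr)
    rcases Nat.lt_or_ge h 2 with hsmall | hbig
    · left
      rw [Seq]
      ext P
      simp only [Set.mem_setOf_eq, Set.mem_empty_iff_false, iff_false]
      rintro ⟨i, j, hi1, hih, -⟩
      omega
    · right
      refine ⟨h - 1, fun i => α (sk i), fun i => A (sk i), B, by omega, ?_, ?_, ?_, ?_, ?_, ?_, Seq⟩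
      · intro i hi1 hih
        have hb : i ≤ sk i ∧ sk i ≤ i + 1 := by simp only [hsk]; split <;> omega
        exact hα1 (sk i) (by omega) (by omega)
      · intro i hi1 hih
        have hb : i ≤ sk i ∧ sk i ≤ i + 1 := by simp only [hsk]; split <;> omega
        have hb2 : i + 1 ≤ sk (i + 1) ∧ sk (i + 1) ≤ i + 2 := by
          simp only [hsk]; split <;> omega
        have hmono : sk i ≤ sk (i + 1) := by simp only [hsk]; split <;> split <;> omega
        exact alpha_mono h α hαd (sk i) (sk (i + 1)) (by omega) hmono (by omega)
      · intro i hi1 hih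
        have hb : i ≤ sk i ∧ sk i ≤ i + 1 := by simp only [hsk]; split <;> omega
        exact hA0 (sk i) (by omega) (by omega)
      · intro j hj1 hjα
        have hjα' : j ≤ α (sk 1) := hjα
        have hb : 1 ≤ sk 1 ∧ sk 1 ≤ 2 := by simp only [hsk]; split <;> omega
        have : α (sk 1) ≤ α 1 := alpha_mono h α hαd 1 (sk 1) le_rfl (by omega) (by omega)
        exact hB0 j hj1 (by omega)
      · intro i i' hi1 hih hi'1 hi'h hne
        have hb : i ≤ sk i ∧ sk i ≤ i + 1 := by simp only [hsk]; split <;> omega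
        have hb' : i' ≤ sk i' ∧ sk i' ≤ i' + 1 := by simp only [hsk]; split <;> omega
        have hinj : sk i ≠ sk i' := by simp only [hsk]; split <;> split <;> omega
        exact hAc (sk i) (sk i') (by omega) (by omega) (by omega) (by omega) hinj
      · intro j j' hj1 hjα hj'1 hj'α hne
        have hjα2 : j ≤ α (sk 1) := hjα
        have hj'α2 : j' ≤ α (sk 1) := hj'α
        have hb : 1 ≤ sk 1 ∧ sk 1 ≤ 2 := by simp only [hsk]; split <;> omega
        have : α (sk 1) ≤ α 1 := alpha_mono h α hαd 1 (sk 1) le_rfl (by omega) (by omega)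
        exact hBc j j' hj1 (by omega) hj'1 (by omega) hne

lemma ferrersV (W : Set ((ℂ × ℂ) × (ℂ × ℂ))) (hW : IsFerrers W) (d : ℂ × ℂ)
    (hd : d ≠ 0) :
    {P ∈ W | Vf d ∉ Ipt P} = ∅ ∨ IsFerrers {P ∈ W | Vf d ∉ Ipt P} := by
  obtain ⟨h, α, A, B, hh, hα1, hαd, hA0, hB0, hAc, hBc, hWeq⟩ := hW
  have hα1' : ∀ i, 1 ≤ i → i ≤ h → α i ≤ α 1 := fun i hi1 hih =>
    alpha_mono h α hαd 1 i le_rfl hi1 hih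
  by_cases hex : ∃ j₀, 1 ≤ j₀ ∧ j₀ ≤ α 1 ∧ cross d (B j₀) = 0
  case neg =>
    push_neg at hex
    right
    refine ⟨h, α, A, B, hh, hα1, hαd, hA0, hB0, hAc, hBc, ?_⟩
    rw [← hWeq]
    ext P
    simp only [Set.mem_sep_iff, and_iff_left_iff_imp]
    intro hPW
    rw [hWeq] at hPW
    obtain ⟨i, j, hi1, hih, hj1, hjα, hPe⟩ := hPW
    have hjα1 : j ≤ α 1 := le_trans hjα (hα1' i hi1 hih)
    rw [hPe, Vf_mem_Ipt _ (hB0 j hj1 hjα1) d]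
    exact hex j hj1 hjα1
  case pos =>
    obtain ⟨j₀, hj₀1, hj₀α, hcr⟩ := hex
    set α' : ℕ → ℕ := fun i => if j₀ ≤ α i then α i - 1 else α i with hα'def
    set sk : ℕ → ℕ := fun j => if j < j₀ then j else j + 1 with hskdef
    have hα'le : ∀ i, α' i ≤ α i := by
      intro i; simp only [hα'def]; split <;> omega
    have hα'mono : ∀ i i', 1 ≤ i → i ≤ i' → i' ≤ h → α' i' ≤ α' i := by
      intro i i' hi1 hii' hi'h
      have hm := alpha_mono h α hαd i i' hi1 hii' hi'h
      simp only [hα'def]; split <;> split <;> omega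
    set F : Finset ℕ := (Finset.Icc 1 h).filter (fun i => 1 ≤ α' i) with hFdef
    set h' : ℕ := F.card with hh'def
    have hF : F = Finset.Icc 1 h' := by
      rw [hh'def]
      apply down_closed h F (Finset.filter_subset _ _)
      intro i hi j hj1 hji
      rw [Finset.mem_filter, Finset.mem_Icc] at hi ⊢
      exact ⟨⟨hj1, by omega⟩, le_trans hi.2 (hα'mono j i hj1 hji hi.1.2)⟩
    have hch : ∀ i, (1 ≤ i ∧ i ≤ h') ↔ (1 ≤ i ∧ i ≤ h ∧ 1 ≤ α' i) := by
      intro i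
      constructor
      · rintro ⟨h1, h2⟩
        have : i ∈ F := by rw [hF]; exact Finset.mem_Icc.mpr ⟨h1, h2⟩
        rw [Finset.mem_filter, Finset.mem_Icc] at this
        exact ⟨this.1.1, this.1.2, this.2⟩
      · rintro ⟨h1, h2, h3⟩
        have : i ∈ F := Finset.mem_filter.mpr ⟨Finset.mem_Icc.mpr ⟨h1, h2⟩, h3⟩
        rw [hF, Finset.mem_Icc] at this
        exact this
    have Seq : {P ∈ W | Vf d ∉ Ipt P} =
        {P | ∃ i j, 1 ≤ i ∧ i ≤ h' ∧ 1 ≤ j ∧ j ≤ α' i ∧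
          P = (A i, (fun j => B (sk j)) j)} := by
      ext P
      simp only [Set.mem_sep_iff, Set.mem_setOf_eq]
      constructor
      · rintro ⟨hPW, hPV⟩
        rw [hWeq] at hPW
        obtain ⟨i, j, hi1, hih, hj1, hjα, hPe⟩ := hPW
        have hjα1 : j ≤ α 1 := le_trans hjα (hα1' i hi1 hih)
        have hcrj : cross d (B j) ≠ 0 := by
          intro h0
          exact hPV (hPe ▸ (Vf_mem_Ipt (A i, B j) (hB0 j hj1 hjα1) d).mpr h0)
        have hne : j ≠ j₀ := fun hco => hcrj (hco ▸ hcr)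
        rcases Nat.lt_or_ge j j₀ with hlt | hge
        · have hskj : sk j = j := by simp only [hskdef]; split <;> omega
          have hjα' : j ≤ α' i := by simp only [hα'def]; split <;> omega
          exact ⟨i, j, hi1, ((hch i).mpr ⟨hi1, hih, by omega⟩).2, hj1, hjα',
            by rw [hskj]; exact hPe⟩
        · have hgt : j₀ < j := by omega
          have hskj : sk (j - 1) = j := by simp only [hskdef]; split <;> omega
          have hj₀αi : j₀ ≤ α i := by omega
          have hjα' : j - 1 ≤ α' i := by simp only [hα'def]; split <;> omega
          exact ⟨i, j - 1, hi1, ((hch i).mpr ⟨hi1, hih, by omega⟩).2, by omega, hjα',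
            by rw [hskj]; exact hPe⟩
      · rintro ⟨i, j, hi1, hih', hj1, hjα', hPe⟩
        obtain ⟨-, hih, hα'i⟩ := (hch i).mp ⟨hi1, hih'⟩
        have hskb : j ≤ sk j ∧ sk j ≤ j + 1 ∧ sk j ≠ j₀ := by
          simp only [hskdef]; split <;> omega
        have hskα : sk j ≤ α i := by
          have h2 := hjα'
          simp only [hα'def] at h2
          simp only [hskdef]
          split at h2 <;> split <;> omega
        have hsk1 : 1 ≤ sk j := by omega
        have hskα1 : sk j ≤ α 1 := le_trans hskα (hα1' i hi1 hih)
        constructor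
        · rw [hWeq]
          exact ⟨i, sk j, hi1, hih, hsk1, hskα, hPe⟩
        · rw [hPe]
          rw [Vf_mem_Ipt _ (hB0 (sk j) hsk1 hskα1) d]
          intro h0
          exact hBc (sk j) j₀ hsk1 hskα1 hj₀1 hj₀α hskb.2.2
            (cross_trans d _ _ hd h0 hcr)
    rcases Nat.eq_zero_or_pos h' with hz | hpos
    · left
      rw [Seq]
      ext P
      simp only [Set.mem_setOf_eq, Set.mem_empty_iff_false, iff_false]
      rintro ⟨i, j, hi1, hih, -⟩
      omega
    · right
      refine ⟨h', α', A, fun j => B (sk j), hpos, ?_, ?_, ?_, ?_, ?_, ?_, Seq⟩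
      · intro i hi1 hih
        exact ((hch i).mp ⟨hi1, hih⟩).2.2
      · intro i hi1 hih
        obtain ⟨-, hih1, -⟩ := (hch (i + 1)).mp ⟨by omega, hih⟩
        exact hα'mono i (i + 1) hi1 (by omega) hih1
      · intro i hi1 hih
        obtain ⟨-, hih1, -⟩ := (hch i).mp ⟨hi1, hih⟩
        exact hA0 i hi1 hih1
      · intro j hj1 hjα'
        have h2 : j ≤ α' 1 := hjα'
        have hb : sk j ≤ α 1 ∧ sk j ≠ j₀ ∧ 1 ≤ sk j := by
          simp only [hα'def] at h2
          simp only [hskdef]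
          split at h2 <;> split <;> omega
        exact hB0 (sk j) hb.2.2 hb.1
      · intro i i' hi1 hih hi'1 hi'h hne
        obtain ⟨-, hihh, -⟩ := (hch i).mp ⟨hi1, hih⟩
        obtain ⟨-, hi'hh, -⟩ := (hch i').mp ⟨hi'1, hi'h⟩
        exact hAc i i' hi1 hihh hi'1 hi'hh hne
      · intro j j' hj1 hjα' hj'1 hj'α' hne
        have h2 : j ≤ α' 1 := hjα'
        have h2' : j' ≤ α' 1 := hj'α'
        have hb : sk j ≤ α 1 ∧ sk j ≠ j₀ ∧ 1 ≤ sk j := by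
          simp only [hα'def] at h2
          simp only [hskdef]
          split at h2 <;> split <;> omega
        have hb' : sk j' ≤ α 1 ∧ sk j' ≠ j₀ ∧ 1 ≤ sk j' := by
          simp only [hα'def] at h2'
          simp only [hskdef]
          split at h2' <;> split <;> omega
        have hinj : sk j ≠ sk j' := by simp only [hskdef]; split <;> split <;> omega
        exact hBc (sk j) (sk j') hb.2.2 hb.1 hb'.2.2 hb'.1 hinj

/-- Lemma 2.13: for a Ferrers configuration X and any degree (1,0) form H
(resp. degree (0,1) form V), ⟨H⟩ ⊓ I_X = ⟨H⟩ * I_{X∖H} and X∖H is again a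
Ferrers configuration or empty (and similarly for V). -/
theorem statement5 (W : Set ((ℂ × ℂ) × (ℂ × ℂ))) (hW : IsFerrers W)
    (c d : ℂ × ℂ) (hc : c ≠ 0) (hd : d ≠ 0) :
    (Ideal.span {Hf c} ⊓ IptsSet W =
        Ideal.span {Hf c} * IptsSet {P ∈ W | Hf c ∉ Ipt P} ∧
      ({P ∈ W | Hf c ∉ Ipt P} = ∅ ∨ IsFerrers {P ∈ W | Hf c ∉ Ipt P})) ∧
    (Ideal.span {Vf d} ⊓ IptsSet W =
        Ideal.span {Vf d} * IptsSet {P ∈ W | Vf d ∉ Ipt P} ∧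
      ({P ∈ W | Vf d ∉ Ipt P} = ∅ ∨ IsFerrers {P ∈ W | Vf d ∉ Ipt P})) := by
  have hprime : ∀ P ∈ W, (Ipt P).IsPrime := by
    obtain ⟨h, α, A, B, hh, hα1, hαd, hA0, hB0, hAc, hBc, hWeq⟩ := hW
    intro P hP
    rw [hWeq] at hP
    obtain ⟨i, j, hi1, hih, hj1, hjα, hPe⟩ := hP
    have hjα1 : j ≤ α 1 := le_trans hjα (alpha_mono h α hαd 1 i le_rfl hi1 hih)
    rw [hPe]
    exact Ipt_prime_s5 (A i, B j) (hA0 i hi1 hih) (hB0 j hj1 hjα1)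
  exact ⟨⟨span_inf (Hf c) W hprime, ferrersH W hW c hc⟩,
         ⟨span_inf (Vf d) W hprime, ferrersV W hW d hd⟩⟩
end
end

section
/- Let P₁,…,P_m be pairwise distinct points of ℙ¹×ℙ¹, let H₁,…,H_t be pairwise non-proportional degree (1,0) forms and V₁,…,V_p pairwise non-proportional degree (0,1) forms, and suppose no point Pᵢ lies on any of the lines, i.e. Hⱼ ∉ I_{Pᵢ} and V_k ∉ I_{Pᵢ} for all i, j, k. Then (⋂_{i=1}^m I_{Pᵢ}) ⊓ (⋂_{j=1}^t ⟨Hⱼ⟩) ⊓ (⋂_{k=1}^p ⟨V_k⟩) = ⟨H₁⋯H_t · V₁⋯V_p⟩ * (⋂_{i=1}^m I_{Pᵢ}). -/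
/- Common setup: R = ℂ[x₀,x₁,y₀,y₁] as MvPolynomial (Fin 4) ℂ with
   x₀ = X 0, x₁ = X 1, y₀ = X 2, y₁ = X 3.
   `Hf a` is the horizontal form a₁x₀ - a₀x₁ of the point a = [a₀:a₁] ∈ ℙ¹;
   `Vf b` is the vertical form b₁y₀ - b₀y₁;
   `cross a b ≠ 0` says the (nonzero) pairs a, b are non-proportional,
   i.e. define distinct points of ℙ¹. -/

open MvPolynomial

noncomputable section

lemma lin_sub (a : ℂ × ℂ) (ha : a ≠ 0) (i j : Fin 4) :
    ∃ g0 g1 : R, C a.2 * g0 - C a.1 * g1 = 0 ∧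
      (∃ r : ℂ, X i - g0 = C r * (C a.2 * X i - C a.1 * X j)) ∧
      (∃ s : ℂ, X j - g1 = C s * (C a.2 * X i - C a.1 * X j)) := by
  by_cases h2 : a.2 = 0
  · have h1 : a.1 ≠ 0 := by intro h; exact ha (Prod.ext h h2)
    refine ⟨X i, 0, by simp [h2], ⟨0, by simp⟩, ⟨-a.1⁻¹, ?_⟩⟩
    simp only [← smul_eq_C_mul, h2]
    match_scalars <;> field_simp <;> simp
  · refine ⟨C (a.1 / a.2) * X j, X j, ?_, ⟨a.2⁻¹, ?_⟩, ⟨0, by simp⟩⟩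
    · simp only [← smul_eq_C_mul]
      match_scalars <;> field_simp <;> simp
    · simp only [← smul_eq_C_mul]
      match_scalars <;> field_simp

lemma span_eq_ker (g : Fin 4 → R) (S : Set R)
    (h1 : ∀ s ∈ S, aeval g s = 0)
    (h2 : ∀ i, X i - g i ∈ Ideal.span S) :
    Ideal.span S = RingHom.ker (aeval g : R →ₐ[ℂ] R) := by
  have key : ∀ f : R, f - aeval g f ∈ Ideal.span S := by
    intro f
    induction f using MvPolynomial.induction_on with
    | C a => simp
    | add f1 f2 ih1 ih2 =>
        have h := Ideal.add_mem _ ih1 ih2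
        have e : f1 - aeval g f1 + (f2 - aeval g f2) = f1 + f2 - aeval g (f1 + f2) := by
          rw [map_add]; ring
        rwa [e] at h
    | mul_X f i ih =>
        have e : f * X i - aeval g (f * X i)
            = (f - aeval g f) * X i + aeval g f * (X i - g i) := by
          rw [map_mul, aeval_X]; ring
        rw [e]
        exact Ideal.add_mem _ (Ideal.mul_mem_right _ _ ih) (Ideal.mul_mem_left _ _ (h2 i))
  apply le_antisymm
  · rw [Ideal.span_le]
    intro s hs
    simpa [RingHom.mem_ker] using h1 s hs
  · intro f hf
    have hf0 : aeval g f = 0 := by simpa [RingHom.mem_ker] using hf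
    have h := key f
    rwa [hf0, sub_zero] at h

lemma Hf_ne_zero {a : ℂ × ℂ} (ha : a ≠ 0) : Hf a ≠ 0 := by
  intro h
  apply ha
  have h1 := congrArg (eval ![1, 0, 0, 0]) h
  have h2 := congrArg (eval ![0, 1, 0, 0]) h
  simp [Hf] at h1 h2
  exact Prod.ext h2 h1

lemma Vf_ne_zero {b : ℂ × ℂ} (hb : b ≠ 0) : Vf b ≠ 0 := by
  intro h
  apply hb
  have h1 := congrArg (eval ![0, 0, 1, 0]) h
  have h2 := congrArg (eval ![0, 0, 0, 1]) h
  simp [Vf] at h1 h2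
  exact Prod.ext h2 h1

lemma Hf_prime {a : ℂ × ℂ} (ha : a ≠ 0) : Prime (Hf a) := by
  rw [← Ideal.span_singleton_prime (Hf_ne_zero ha)]
  obtain ⟨g0, g1, e0, ⟨r0, e1⟩, ⟨r1, e2⟩⟩ := lin_sub a ha 0 1
  have hm : Hf a ∈ Ideal.span ({Hf a} : Set R) := Ideal.mem_span_singleton_self _
  have hk := span_eq_ker ![g0, g1, X 2, X 3] {Hf a} ?_ ?_
  · rw [hk]; exact RingHom.ker_isPrime _
  · rintro s rfl
    simp only [Hf, map_sub, map_mul, aeval_C, aeval_X, algebraMap_eq]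
    simpa [algebraMap_eq] using e0
  · intro i
    fin_cases i
    · simpa [Hf, Matrix.cons_val_zero] using e1 ▸ Ideal.mul_mem_left _ (C r0) hm
    · simpa [Hf, Matrix.cons_val_one] using e2 ▸ Ideal.mul_mem_left _ (C r1) hm
    · simp
    · simp

lemma Vf_prime {b : ℂ × ℂ} (hb : b ≠ 0) : Prime (Vf b) := by
  rw [← Ideal.span_singleton_prime (Vf_ne_zero hb)]
  obtain ⟨g2, g3, e0, ⟨r2, e1⟩, ⟨r3, e2⟩⟩ := lin_sub b hb 2 3
  have hm : Vf b ∈ Ideal.span ({Vf b} : Set R) := Ideal.mem_span_singleton_self _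
  have hk := span_eq_ker ![X 0, X 1, g2, g3] {Vf b} ?_ ?_
  · rw [hk]; exact RingHom.ker_isPrime _
  · rintro s rfl
    simp only [Vf, map_sub, map_mul, aeval_C, aeval_X, algebraMap_eq]
    simpa [algebraMap_eq] using e0
  · intro i
    fin_cases i
    · simp
    · simp
    · simpa [Vf] using e1 ▸ Ideal.mul_mem_left _ (C r2) hm
    · simpa [Vf] using e2 ▸ Ideal.mul_mem_left _ (C r3) hm

lemma Ipt_isPrime {Q : (ℂ × ℂ) × (ℂ × ℂ)} (h1 : Q.1 ≠ 0) (h2 : Q.2 ≠ 0) :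
    (Ipt Q).IsPrime := by
  obtain ⟨g0, g1, e0, ⟨r0, e1⟩, ⟨r1, e2⟩⟩ := lin_sub Q.1 h1 0 1
  obtain ⟨g2, g3, f0, ⟨s2, f1⟩, ⟨s3, f2⟩⟩ := lin_sub Q.2 h2 2 3
  have hmH : Hf Q.1 ∈ Ideal.span ({Hf Q.1, Vf Q.2} : Set R) :=
    Ideal.subset_span (Set.mem_insert _ _)
  have hmV : Vf Q.2 ∈ Ideal.span ({Hf Q.1, Vf Q.2} : Set R) :=
    Ideal.subset_span (Set.mem_insert_of_mem _ rfl)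
  have hk := span_eq_ker ![g0, g1, g2, g3] {Hf Q.1, Vf Q.2} ?_ ?_
  · rw [Ipt, hk]; exact RingHom.ker_isPrime _
  · rintro s (rfl | rfl)
    · simp only [Hf, map_sub, map_mul, aeval_C, aeval_X, algebraMap_eq]
      simpa [algebraMap_eq] using e0
    · simp only [Vf, map_sub, map_mul, aeval_C, aeval_X, algebraMap_eq]
      simpa [algebraMap_eq] using f0
  · intro i
    fin_cases i
    · simpa [Hf] using e1 ▸ Ideal.mul_mem_left _ (C r0) hmH
    · simpa [Hf] using e2 ▸ Ideal.mul_mem_left _ (C r1) hmH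
    · simpa [Vf] using f1 ▸ Ideal.mul_mem_left _ (C s2) hmV
    · simpa [Vf] using f2 ▸ Ideal.mul_mem_left _ (C s3) hmV

lemma dvd_eval_zero {f g : R} (h : f ∣ g) (v : Fin 4 → ℂ) (hf : eval v f = 0) :
    eval v g = 0 := by
  obtain ⟨w, rfl⟩ := h; rw [map_mul, hf, zero_mul]

lemma exists_pt (a : ℂ × ℂ) (ha : a ≠ 0) : ∃ u v : ℂ, a.2 * u - a.1 * v ≠ 0 := by
  by_cases h2 : a.2 = 0
  · have h1 : a.1 ≠ 0 := by intro h; exact ha (Prod.ext h h2)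
    exact ⟨0, -1, by simpa using h1⟩
  · exact ⟨1, 0, by simpa using h2⟩

lemma not_dvd_HH {c c' : ℂ × ℂ} (h : cross c c' ≠ 0) : ¬ Hf c ∣ Hf c' := by
  intro hd
  have h0 : eval ![c.1, c.2, 0, 0] (Hf c) = 0 := by simp [Hf]; ring
  have h1 := dvd_eval_zero hd _ h0
  simp [Hf] at h1
  exact h (by unfold cross; linear_combination h1)

lemma not_dvd_VV {d d' : ℂ × ℂ} (h : cross d d' ≠ 0) : ¬ Vf d ∣ Vf d' := by
  intro hd
  have h0 : eval ![0, 0, d.1, d.2] (Vf d) = 0 := by simp [Vf]; ring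
  have h1 := dvd_eval_zero hd _ h0
  simp [Vf] at h1
  exact h (by unfold cross; linear_combination h1)

lemma not_dvd_HV {c d : ℂ × ℂ} (hd : d ≠ 0) : ¬ Hf c ∣ Vf d := by
  intro hdvd
  obtain ⟨u, v, huv⟩ := exists_pt d hd
  have h0 : eval ![c.1, c.2, u, v] (Hf c) = 0 := by simp [Hf]; ring
  have h1 := dvd_eval_zero hdvd _ h0
  simp [Vf] at h1
  exact huv h1

lemma not_dvd_VH {c d : ℂ × ℂ} (hc : c ≠ 0) : ¬ Vf d ∣ Hf c := by
  intro hdvd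
  obtain ⟨u, v, huv⟩ := exists_pt c hc
  have h0 : eval ![u, v, d.1, d.2] (Vf d) = 0 := by simp [Vf]; ring
  have h1 := dvd_eval_zero hdvd _ h0
  simp [Hf] at h1
  exact huv h1

lemma prod_dvd {ι : Type*} [DecidableEq ι] (s : Finset ι) (f : ι → R)
    (hpr : ∀ i ∈ s, ∀ j ∈ s, i ≠ j → IsRelPrime (f i) (f j)) {x : R}
    (hdvd : ∀ i ∈ s, f i ∣ x) : (∏ i ∈ s, f i) ∣ x := by
  induction s using Finset.induction with
  | empty => simpa using one_dvd x
  | @insert a s' ha ih =>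
    rw [Finset.prod_insert ha]
    have hrel : IsRelPrime (f a) (∏ i ∈ s', f i) :=
      IsRelPrime.prod_right fun i hi =>
        hpr a (Finset.mem_insert_self a s') i (Finset.mem_insert_of_mem hi)
          (fun h => ha (h ▸ hi))
    exact hrel.mul_dvd (hdvd a (Finset.mem_insert_self a s'))
      (ih (fun i hi j hj hij => hpr i (Finset.mem_insert_of_mem hi) j
        (Finset.mem_insert_of_mem hj) hij)
        (fun i hi => hdvd i (Finset.mem_insert_of_mem hi)))

lemma mem_biInf {ι : Type*} {s : Finset ι} {F : ι → Ideal R} {x : R} :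
    x ∈ (⨅ i ∈ s, F i) ↔ ∀ i ∈ s, x ∈ F i := by
  simp [Submodule.mem_iInf]

/-- Theorem 4.3: for pairwise distinct points P₁,…,P_m of ℙ¹×ℙ¹, pairwise
non-proportional degree (1,0) forms H₁,…,H_t and degree (0,1) forms V₁,…,V_p with
no point on any of the lines, the intersection of all the ideals equals the principal
ideal generated by the product of the lines times the ideal of the points. -/
theorem statement6 (m t p : ℕ)
    (P : ℕ → (ℂ × ℂ) × (ℂ × ℂ)) (c : ℕ → ℂ × ℂ) (d : ℕ → ℂ × ℂ)
    (hPval : ∀ i ∈ Finset.Icc 1 m, (P i).1 ≠ 0 ∧ (P i).2 ≠ 0)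
    (hPd : ∀ i ∈ Finset.Icc 1 m, ∀ i' ∈ Finset.Icc 1 m, i ≠ i' →
      cross (P i).1 (P i').1 ≠ 0 ∨ cross (P i).2 (P i').2 ≠ 0)
    (hc0 : ∀ j ∈ Finset.Icc 1 t, c j ≠ 0)
    (hd0 : ∀ k ∈ Finset.Icc 1 p, d k ≠ 0)
    (hcd : ∀ j ∈ Finset.Icc 1 t, ∀ j' ∈ Finset.Icc 1 t, j ≠ j' → cross (c j) (c j') ≠ 0)
    (hdd : ∀ k ∈ Finset.Icc 1 p, ∀ k' ∈ Finset.Icc 1 p, k ≠ k' → cross (d k) (d k') ≠ 0)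
    (hHP : ∀ i ∈ Finset.Icc 1 m, ∀ j ∈ Finset.Icc 1 t, Hf (c j) ∉ Ipt (P i))
    (hVP : ∀ i ∈ Finset.Icc 1 m, ∀ k ∈ Finset.Icc 1 p, Vf (d k) ∉ Ipt (P i)) :
    (⨅ i ∈ Finset.Icc 1 m, Ipt (P i)) ⊓ (⨅ j ∈ Finset.Icc 1 t, Ideal.span {Hf (c j)}) ⊓
        (⨅ k ∈ Finset.Icc 1 p, Ideal.span {Vf (d k)}) =
      Ideal.span {(∏ j ∈ Finset.Icc 1 t, Hf (c j)) * ∏ k ∈ Finset.Icc 1 p, Vf (d k)} *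
        (⨅ i ∈ Finset.Icc 1 m, Ipt (P i)) := by
  classical
  set J : Ideal R := ⨅ i ∈ Finset.Icc 1 m, Ipt (P i) with hJ
  set A : R := ∏ j ∈ Finset.Icc 1 t, Hf (c j) with hA
  set B : R := ∏ k ∈ Finset.Icc 1 p, Vf (d k) with hB
  have primeH : ∀ j ∈ Finset.Icc 1 t, Prime (Hf (c j)) := fun j hj => Hf_prime (hc0 j hj)
  have primeV : ∀ k ∈ Finset.Icc 1 p, Prime (Vf (d k)) := fun k hk => Vf_prime (hd0 k hk)
  have primeI : ∀ i ∈ Finset.Icc 1 m, (Ipt (P i)).IsPrime := fun i hi =>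
    Ipt_isPrime (hPval i hi).1 (hPval i hi).2
  have relHH : ∀ j ∈ Finset.Icc 1 t, ∀ j' ∈ Finset.Icc 1 t, j ≠ j' →
      IsRelPrime (Hf (c j)) (Hf (c j')) := fun j hj j' hj' hne =>
    (primeH j hj).irreducible.isRelPrime_iff_not_dvd.mpr (not_dvd_HH (hcd j hj j' hj' hne))
  have relVV : ∀ k ∈ Finset.Icc 1 p, ∀ k' ∈ Finset.Icc 1 p, k ≠ k' →
      IsRelPrime (Vf (d k)) (Vf (d k')) := fun k hk k' hk' hne =>
    (primeV k hk).irreducible.isRelPrime_iff_not_dvd.mpr (not_dvd_VV (hdd k hk k' hk' hne))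
  have relAB : IsRelPrime A B := by
    apply IsRelPrime.prod_left
    intro j hj
    apply IsRelPrime.prod_right
    intro k hk
    exact (primeH j hj).irreducible.isRelPrime_iff_not_dvd.mpr (not_dvd_HV (hd0 k hk))
  have Fnotin : ∀ i ∈ Finset.Icc 1 m, A * B ∉ Ipt (P i) := by
    intro i hi hmem
    haveI := primeI i hi
    rcases (primeI i hi).mem_or_mem hmem with hA' | hB'
    · obtain ⟨j, hj, hjm⟩ := (Ideal.IsPrime.prod_mem_iff).mp hA'
      exact hHP i hi j hj hjm
    · obtain ⟨k, hk, hkm⟩ := (Ideal.IsPrime.prod_mem_iff).mp hB'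
      exact hVP i hi k hk hkm
  apply le_antisymm
  · intro x hx
    obtain ⟨⟨hxJ, hxH⟩, hxV⟩ := hx
    have hAx : A ∣ x := by
      apply prod_dvd _ _ relHH
      intro j hj
      rw [← Ideal.mem_span_singleton]
      exact (mem_biInf.mp hxH) j hj
    have hBx : B ∣ x := by
      apply prod_dvd _ _ relVV
      intro k hk
      rw [← Ideal.mem_span_singleton]
      exact (mem_biInf.mp hxV) k hk
    obtain ⟨g, rfl⟩ := relAB.mul_dvd hAx hBx
    have hg : g ∈ J := by
      rw [hJ]
      refine mem_biInf.mpr fun i hi => ?_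
      have hxi : A * B * g ∈ Ipt (P i) := (mem_biInf.mp hxJ) i hi
      rcases (primeI i hi).mem_or_mem hxi with h | h
      · exact absurd h (Fnotin i hi)
      · exact h
    exact Ideal.mul_mem_mul (Ideal.mem_span_singleton_self _) hg
  · refine le_inf (le_inf Ideal.mul_le_right ?_) ?_
    · refine le_trans Ideal.mul_le_left ?_
      refine le_iInf₂ fun j hj => ?_
      rw [Ideal.span_singleton_le_span_singleton]
      exact dvd_mul_of_dvd_left (Finset.dvd_prod_of_mem _ hj) B
    · refine le_trans Ideal.mul_le_left ?_
      refine le_iInf₂ fun k hk => ?_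
      rw [Ideal.span_singleton_le_span_singleton]
      exact dvd_mul_of_dvd_right (Finset.dvd_prod_of_mem _ hk) A
end
end
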